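/- arXiv:2409.14812 — 7 statements merged into one kernel-verified Lean document; each statement's English description precedes it below -/
import Mathlib

section
/- Let R₀ > 0 and suppose additionally that v(r) > 0 for 0 ≤ r < R₀, that v is twice continuously differentiable on [0,R₀), and that v vanishes to order n ∈ [0,∞) at the boundary of its support, i.e. v(r) = (R₀ − r)^n v₁(r) on [0,R₀] for some continuous function v₁ with v₁(r) > 0 for all r ∈ [0,R₀]. For each μ > 0 let m^μ be a zero-energy scattering solution with scattering length 𝔞₀^μ := R₀ − m^μ(R₀). Then there exist constants C > 0 and μ₀ > 0, depending only on v, n and R₀, such that for all 0 < μ ≤ μ₀ one has 0 ≤ 𝔠₀ − 𝔞₀^μ ≤ C μ^{1/(n+2)}, where 𝔠₀ := R₀ is the capacity. -/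
open Set MeasureTheory

/-- A zero-energy scattering solution `m` for the radial potential `v` supported in `[0, R₀]`
with semiclassical parameter `μ`: it satisfies `μ m'' = v m` on `(0,∞)`, is continuous on
`[0,∞)` and continuously differentiable on `(0,∞)`, with `m(0) = 0`, `m > 0` on `(0,∞)`, and
`m(r) = r - 𝔞₀^μ` for `r ≥ R₀`, where `𝔞₀^μ := R₀ - m(R₀)` is the scattering length. -/
structure ZeroEnergyScattering (v : ℝ → ℝ) (R₀ μ : ℝ) (m : ℝ → ℝ) : Prop where
  cont : ContinuousOn m (Set.Ici 0)
  diff : ∀ r ∈ Set.Ioi (0 : ℝ), DifferentiableAt ℝ m r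
  derivCont : ContinuousOn (deriv m) (Set.Ioi 0)
  diff2 : ∀ r ∈ Set.Ioi (0 : ℝ), DifferentiableAt ℝ (deriv m) r
  ode : ∀ r ∈ Set.Ioi (0 : ℝ), μ * deriv (deriv m) r = v r * m r
  zero : m 0 = 0
  pos : ∀ r ∈ Set.Ioi (0 : ℝ), 0 < m r
  radiation : ∀ r, R₀ ≤ r → m r = r - (R₀ - m R₀)

/-- **Quantitative semiclassical convergence of the scattering length to the capacity.**
If `v` is a bounded nonnegative radial potential, strictly positive and `C²` in the interior
of its support `[0,R₀]`, vanishing to order `n` at the boundary, and for each `μ > 0` the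
function `m μ` is a zero-energy scattering solution with scattering length
`𝔞₀^μ = R₀ - m μ R₀`, then `0 ≤ 𝔠₀ - 𝔞₀^μ ≤ C μ^(1/(n+2))` for all small `μ`, where
`𝔠₀ = R₀` is the capacity. -/
theorem quantitative_scattering_length
    (R₀ : ℝ) (hR₀ : 0 < R₀)
    (v : ℝ → ℝ) (hv_meas : Measurable v) (hv_nonneg : ∀ r, 0 ≤ v r)
    (hv_bdd : BddAbove (Set.range v))
    (hv_supp : ∀ r, R₀ ≤ r → v r = 0)
    (hv_pos : ∀ r, 0 ≤ r → r < R₀ → 0 < v r)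
    (hv_smooth : ContDiffOn ℝ 2 v (Set.Ico 0 R₀))
    (n : ℝ) (hn : 0 ≤ n)
    (v₁ : ℝ → ℝ) (hv₁_cont : ContinuousOn v₁ (Set.Icc 0 R₀))
    (hv₁_pos : ∀ r ∈ Set.Icc (0 : ℝ) R₀, 0 < v₁ r)
    (hfact : ∀ r ∈ Set.Icc (0 : ℝ) R₀, v r = (R₀ - r) ^ n * v₁ r)
    (m : ℝ → ℝ → ℝ)
    (hm : ∀ μ, 0 < μ → ZeroEnergyScattering v R₀ μ (m μ)) :
    ∃ C > (0 : ℝ), ∃ μ₀ > (0 : ℝ), ∀ μ, 0 < μ → μ ≤ μ₀ →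
      0 ≤ R₀ - (R₀ - m μ R₀) ∧ R₀ - (R₀ - m μ R₀) ≤ C * μ ^ (1 / (n + 2)) := by
  -- the minimum of v₁ on [0,R₀]
  obtain ⟨x₀, hx₀, hminOn⟩ :=
    isCompact_Icc.exists_isMinOn (Set.nonempty_Icc.2 hR₀.le) hv₁_cont
  set c := v₁ x₀ with hc_def
  have hc : 0 < c := hv₁_pos x₀ hx₀
  have hc' : ∀ r ∈ Icc (0:ℝ) R₀, c ≤ v₁ r := fun r hr => hminOn hr
  have hn2 : (0:ℝ) < n + 2 := by linarith
  obtain ⟨Cv, hCv⟩ := hv_bdd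
  have hCv' : ∀ r, v r ≤ Cv := fun r => hCv ⟨r, rfl⟩
  refine ⟨4 * (1/(2*c)) ^ (1/(n+2)), by positivity, 1, one_pos, fun μ hμ _ => ?_⟩
  have H := hm μ hμ
  set b := m μ R₀ with hb_def
  have hb : 0 < b := H.pos R₀ hR₀
  -- second-derivative formula and nonnegativity
  have hdd : ∀ r ∈ Ioi (0:ℝ), deriv (deriv (m μ)) r = v r * m μ r / μ := by
    intro r hr
    rw [eq_div_iff hμ.ne', mul_comm]
    exact H.ode r hr
  have hdd_nonneg : ∀ r ∈ Ioi (0:ℝ), 0 ≤ deriv (deriv (m μ)) r := by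
    intro r hr
    rw [hdd r hr]
    exact div_nonneg (mul_nonneg (hv_nonneg r) (H.pos r hr).le) hμ.le
  -- m' is monotone on (0,∞)
  have hmono : MonotoneOn (deriv (m μ)) (Ioi 0) := by
    apply monotoneOn_of_deriv_nonneg (convex_Ioi 0) H.derivCont
    · intro r hr
      rw [interior_Ioi] at hr
      exact (H.diff2 r hr).differentiableWithinAt
    · intro r hr
      rw [interior_Ioi] at hr
      exact hdd_nonneg r hr
  -- m'(R₀) = 1
  have h1 : deriv (m μ) R₀ = 1 := by
    have hcw : Filter.Tendsto (deriv (m μ)) (nhdsWithin R₀ (Ioi R₀)) (nhds (deriv (m μ) R₀)) :=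
      (H.derivCont R₀ hR₀).mono (Ioi_subset_Ioi hR₀.le)
    have h2 : ∀ᶠ r in nhdsWithin R₀ (Ioi R₀), deriv (m μ) r = 1 := by
      filter_upwards [self_mem_nhdsWithin] with r hr
      have heq : m μ =ᶠ[nhds r] (fun x => x - (R₀ - b)) := by
        filter_upwards [Ioi_mem_nhds hr] with x hx
        exact H.radiation x (le_of_lt hx)
      rw [heq.deriv_eq]
      simp
    have h3 : Filter.Tendsto (deriv (m μ)) (nhdsWithin R₀ (Ioi R₀)) (nhds 1) :=
      tendsto_const_nhds.congr' (h2.mono fun r h => h.symm)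
    exact tendsto_nhds_unique hcw h3
  -- m' ≤ 1 on (0, R₀]
  have hle1 : ∀ r, 0 < r → r ≤ R₀ → deriv (m μ) r ≤ 1 := by
    intro r h0 hr
    have := hmono (mem_Ioi.2 h0) (mem_Ioi.2 hR₀) hr
    rwa [h1] at this
  -- m' ≥ 0 on (0, ∞)
  have hge0 : ∀ r, 0 < r → 0 ≤ deriv (m μ) r := by
    intro r h0
    obtain ⟨ξ, hξ, hξd⟩ := exists_deriv_eq_slope (m μ) h0
      (H.cont.mono (Icc_subset_Ici_self))
      (fun x hx => (H.diff x hx.1).differentiableWithinAt)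
    have hξ0 : 0 ≤ deriv (m μ) ξ := by
      rw [hξd, H.zero, sub_zero, sub_zero]
      exact div_nonneg (H.pos r h0).le h0.le
    exact hξ0.trans (hmono (mem_Ioi.2 hξ.1) (mem_Ioi.2 h0) hξ.2.le)
  -- m r ≤ r on (0, R₀]
  have hmler : ∀ r, 0 < r → r ≤ R₀ → m μ r ≤ r := by
    intro r h0 hr
    obtain ⟨ξ, hξ, hξd⟩ := exists_deriv_eq_slope (m μ) h0
      (H.cont.mono (Icc_subset_Ici_self))
      (fun x hx => (H.diff x hx.1).differentiableWithinAt)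
    have hd1 : deriv (m μ) ξ ≤ 1 := hle1 ξ hξ.1 (hξ.2.le.trans hr)
    rw [hξd, H.zero, sub_zero, sub_zero] at hd1
    exact (div_le_one h0).1 hd1
  have hbR : b ≤ R₀ := hmler R₀ hR₀ le_rfl
  set a1 := R₀ - b/2 with ha1_def
  set a2 := R₀ - b/4 with ha2_def
  have ha1 : 0 < a1 := by simp only [ha1_def]; linarith
  have ha12 : a1 < a2 := by simp only [ha1_def, ha2_def]; linarith
  have ha2R : a2 < R₀ := by simp only [ha2_def]; linarith
  have ha1R : a1 < R₀ := ha12.trans ha2R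
  -- m ≥ b/2 on [a1, R₀]
  have hm_half : ∀ r, a1 ≤ r → r ≤ R₀ → b/2 ≤ m μ r := by
    intro r hra hrR
    rcases eq_or_lt_of_le hrR with rfl | hlt
    · linarith
    · obtain ⟨ξ, hξ, hξd⟩ := exists_deriv_eq_slope (m μ) hlt
        (H.cont.mono (fun x hx => (ha1.le.trans hra).trans hx.1))
        (fun x hx => (H.diff x (lt_trans (ha1.trans_le hra) hx.1)).differentiableWithinAt)
      have hd1 : deriv (m μ) ξ ≤ 1 :=
        hle1 ξ (lt_trans (ha1.trans_le hra) hξ.1) hξ.2.le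
      rw [hξd] at hd1
      have h4 : m μ R₀ - m μ r ≤ R₀ - r := (div_le_one (by linarith)).1 hd1
      have h5 : R₀ - r ≤ b/2 := by simp only [ha1_def] at hra; linarith
      linarith [h4, h5]
  -- pointwise lower bound on v·m on [a1, a2]
  have hvm_lb : ∀ r ∈ Icc a1 a2, c * (b/4)^n * (b/2) ≤ v r * m μ r := by
    intro r hr
    have hr0 : 0 < r := ha1.trans_le hr.1
    have hrR : r < R₀ := hr.2.trans_lt ha2R
    have hmem : r ∈ Icc (0:ℝ) R₀ := ⟨hr0.le, hrR.le⟩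
    have hb4 : (b/4 : ℝ) ≤ R₀ - r := by
      have := hr.2; simp only [ha2_def] at this; linarith
    have h2 : (b/4:ℝ)^n ≤ (R₀ - r)^n := Real.rpow_le_rpow (by positivity) hb4 hn
    have h3 : c ≤ v₁ r := hc' r hmem
    have h4 : b/2 ≤ m μ r := hm_half r hr.1 (hrR.le)
    rw [hfact r hmem]
    have e : c * (b/4)^n * (b/2) = (b/4)^n * c * (b/2) := by ring
    rw [e]
    have hbn : (0:ℝ) ≤ (b/4)^n := Real.rpow_nonneg (by positivity) n
    have := mul_le_mul (mul_le_mul h2 h3 hc.le (Real.rpow_nonneg (by linarith) n))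
      h4 (by positivity) (mul_nonneg (Real.rpow_nonneg (by linarith) n)
        ((hc.trans_le h3).le))
    linarith [this]
  -- integrability of v·m on (a1, R₀]
  have hIntOn : IntegrableOn (fun r => v r * m μ r) (Ioc a1 R₀) volume := by
    have hm_ae : AEMeasurable (m μ) (volume.restrict (Ioc a1 R₀)) := by
      apply ContinuousOn.aemeasurable _ measurableSet_Ioc
      exact H.cont.mono (fun x hx => le_of_lt (ha1.trans hx.1))
    have hmeas : AEStronglyMeasurable (fun r => v r * m μ r)
        (volume.restrict (Ioc a1 R₀)) :=
      (hv_meas.aemeasurable.mul hm_ae).aestronglyMeasurable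
    apply Integrable.mono' (integrableOn_const (C := Cv * R₀) measure_Ioc_lt_top.ne) hmeas
    filter_upwards [ae_restrict_mem measurableSet_Ioc] with r hr
    have hr0 : 0 < r := ha1.trans hr.1
    have hmm : 0 ≤ m μ r := (H.pos r hr0).le
    rw [Real.norm_eq_abs, abs_of_nonneg (mul_nonneg (hv_nonneg r) hmm)]
    exact mul_le_mul (hCv' r) ((hmler r hr0 hr.2).trans hr.2) hmm
      ((hv_nonneg r).trans (hCv' r))
  have hII : IntervalIntegrable (fun r => v r * m μ r) volume a1 R₀ :=
    (intervalIntegrable_iff_integrableOn_Ioc_of_le ha1R.le).2 hIntOn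
  have hII' : IntervalIntegrable (fun r => v r * m μ r) volume a1 a2 :=
    (intervalIntegrable_iff_integrableOn_Ioc_of_le ha12.le).2
      (hIntOn.mono_set (Ioc_subset_Ioc le_rfl ha2R.le))
  -- FTC
  have hFTC : ∫ r in a1..R₀, deriv (deriv (m μ)) r
      = deriv (m μ) R₀ - deriv (m μ) a1 := by
    apply intervalIntegral.integral_eq_sub_of_hasDerivAt
    · intro x hx
      rw [uIcc_of_le ha1R.le] at hx
      exact (H.diff2 x (ha1.trans_le hx.1)).hasDerivAt
    · rw [intervalIntegrable_iff_integrableOn_Ioc_of_le ha1R.le]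
      exact MeasureTheory.IntegrableOn.congr_fun (hIntOn.div_const μ)
        (fun x hx => (hdd x (ha1.trans hx.1)).symm) measurableSet_Ioc
  -- μ bounds the integral of v·m
  have key : ∫ r in a1..R₀, v r * m μ r ≤ μ := by
    have e1 : ∫ r in a1..R₀, v r * m μ r / μ
        = deriv (m μ) R₀ - deriv (m μ) a1 := by
      rw [← hFTC]
      apply intervalIntegral.integral_congr
      intro x hx
      rw [uIcc_of_le ha1R.le] at hx
      exact (hdd x (ha1.trans_le hx.1)).symm
    have e2 : ∫ r in a1..R₀, v r * m μ r / μ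
        = (∫ r in a1..R₀, v r * m μ r) / μ := by
      simp [div_eq_mul_inv, intervalIntegral.integral_mul_const]
    rw [e2, h1] at e1
    have e3 : (∫ r in a1..R₀, v r * m μ r) / μ ≤ 1 := by
      rw [e1]; linarith [hge0 a1 ha1]
    exact (div_le_one hμ).1 e3
  -- lower bound on the integral
  have i1 : c * (b/4)^n * (b/2) * (b/4) ≤ ∫ r in a1..a2, v r * m μ r := by
    have := intervalIntegral.integral_mono_on ha12.le intervalIntegrable_const hII' hvm_lb
    rw [intervalIntegral.integral_const, smul_eq_mul] at this
    have e : a2 - a1 = b/4 := by simp only [ha1_def, ha2_def]; ring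
    rw [e] at this
    linarith [this]
  have i2 : ∫ r in a1..a2, v r * m μ r ≤ ∫ r in a1..R₀, v r * m μ r := by
    apply intervalIntegral.integral_mono_interval le_rfl ha12.le ha2R.le _ hII
    filter_upwards [ae_restrict_mem measurableSet_Ioc] with r hr
    exact mul_nonneg (hv_nonneg r) (H.pos r (ha1.trans hr.1)).le
  -- combine: 2c (b/4)^(n+2) ≤ μ
  have hrp : (b/4:ℝ)^(n+2) = (b/4)^n * (b/4)^(2:ℝ) := Real.rpow_add (by positivity) n 2
  have hrp2 : (b/4:ℝ)^(2:ℝ) = (b/4)*(b/4) := by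
    rw [show (2:ℝ) = ((2:ℕ):ℝ) by norm_num, Real.rpow_natCast]; ring
  have hkey2 : 2 * c * (b/4)^(n+2) ≤ μ := by
    rw [hrp, hrp2]
    nlinarith [i1, i2, key]
  -- conclude
  have hb4pos : (0:ℝ) < b/4 := by positivity
  have h5 : (b/4:ℝ)^(n+2) ≤ μ * (1/(2*c)) := by
    rw [mul_one_div, le_div_iff₀ (by positivity)]
    linarith
  have h6 : ((b/4:ℝ)^(n+2))^(1/(n+2)) = b/4 := by
    rw [← Real.rpow_mul hb4pos.le, mul_one_div_cancel hn2.ne', Real.rpow_one]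
  have h7 : ((b/4:ℝ)^(n+2))^(1/(n+2)) ≤ (μ * (1/(2*c)))^(1/(n+2)) :=
    Real.rpow_le_rpow (Real.rpow_nonneg hb4pos.le _) h5 (by positivity)
  have h8 : (μ * (1/(2*c)))^(1/(n+2)) = μ^(1/(n+2)) * (1/(2*c))^(1/(n+2)) :=
    Real.mul_rpow hμ.le (by positivity)
  constructor
  · rw [sub_sub_cancel]; exact hb.le
  · rw [sub_sub_cancel]
    rw [h6, h8] at h7
    calc b = 4 * (b/4) := by ring
    _ ≤ 4 * (μ^(1/(n+2)) * (1/(2*c))^(1/(n+2))) := by linarith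
    _ = 4 * (1/(2*c)) ^ (1/(n+2)) * μ ^ (1/(n+2)) := by ring
end

section
/- The scattering function f(r) = m(r)/r satisfies: f is nondecreasing on (0,∞); exp(−√(ζ₀/μ)) ≤ f(r) ≤ 1 for all r > 0; 0 ≤ 1 − f(r) ≤ min(1 − exp(−√(ζ₀/μ)), 𝔞₀^μ/r) for all r > 0; and f(r) ≤ (R₀ − 𝔞₀^μ)/R₀ for all 0 < r ≤ R₀. In particular 0 ≤ 𝔞₀^μ < R₀. -/
open Set MeasureTheory

private lemma exp_neg_cubic (y : ℝ) (hy : 0 ≤ y) :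
    1 - y + y ^ 2 / 2 - y ^ 3 / 6 ≤ Real.exp (-y) := by
  set F : ℝ → ℝ := fun s => Real.exp (-s) - (1 - s + s ^ 2 / 2 - s ^ 3 / 6) with hF
  have hexp : ∀ t : ℝ, HasDerivAt (fun s : ℝ => Real.exp (-s)) (-Real.exp (-t)) t := by
    intro t
    exact ((Real.hasDerivAt_exp (-t)).comp t ((hasDerivAt_id t).neg)).congr_deriv (by simp)
  have hFd : ∀ t : ℝ, HasDerivAt F (-Real.exp (-t) - (-1 + t - t ^ 2 / 2)) t := by
    intro t
    have hp : HasDerivAt (fun s : ℝ => 1 - s + s ^ 2 / 2 - s ^ 3 / 6)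
        (-1 + t - t ^ 2 / 2) t := by
      have h := (((hasDerivAt_const t (1 : ℝ)).sub (hasDerivAt_id t)).add
        ((hasDerivAt_pow 2 t).div_const 2)).sub ((hasDerivAt_pow 3 t).div_const 6)
      refine h.congr_deriv ?_
      push_cast
      ring
    exact (hexp t).sub hp
  set G : ℝ → ℝ := fun t => -Real.exp (-t) - (-1 + t - t ^ 2 / 2) with hG
  have hGd : ∀ t : ℝ, HasDerivAt G (Real.exp (-t) - (1 - t)) t := by
    intro t
    have hp : HasDerivAt (fun s : ℝ => -1 + s - s ^ 2 / 2) (1 - t) t := by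
      have h := (((hasDerivAt_const t (-1 : ℝ)).add (hasDerivAt_id t)).sub
        ((hasDerivAt_pow 2 t).div_const 2))
      refine h.congr_deriv ?_
      push_cast
      ring
    have := ((hexp t).neg).sub hp
    refine this.congr_deriv ?_
    ring
  have hGmono : Monotone G :=
    monotone_of_hasDerivAt_nonneg hGd (by
      intro t
      have := Real.add_one_le_exp (-t)
      simp only [Pi.zero_apply]
      linarith)
  have hG0 : G 0 = 0 := by simp [hG]
  have hFmono : MonotoneOn F (Ici 0) := by
    apply monotoneOn_of_deriv_nonneg (convex_Ici 0)
    · exact fun t _ => ((hFd t).continuousAt).continuousWithinAt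
    · exact fun t _ => ((hFd t).differentiableAt).differentiableWithinAt
    · intro t ht
      rw [interior_Ici, mem_Ioi] at ht
      rw [(hFd t).deriv]
      have : G 0 ≤ G t := hGmono ht.le
      rw [hG0] at this
      simp only [hG] at this
      linarith
  have hF0 : F 0 = 0 := by simp [hF]
  have := hFmono (self_mem_Ici) (mem_Ici.2 hy) hy
  rw [hF0] at this
  simp only [hF] at this
  linarith

private lemma one_sub_exp_le_aux (x : ℝ) (hx : 0 ≤ x) :
    1 - Real.exp (-(2 * x)) ≤ 2 * x / Real.sqrt (1 + x ^ 2) := by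
  have hs0 : (0 : ℝ) < Real.sqrt (1 + x ^ 2) := Real.sqrt_pos.2 (by positivity)
  have hs2 : Real.sqrt (1 + x ^ 2) ^ 2 = 1 + x ^ 2 := Real.sq_sqrt (by positivity)
  set s := Real.sqrt (1 + x ^ 2) with hs
  have hs1 : 1 ≤ s := by nlinarith
  rcases le_or_gt 1 (3 * x ^ 2) with h | h
  · have hxpos : 0 < x := by nlinarith
    have h2x : s ≤ 2 * x := by nlinarith
    have : (1 : ℝ) ≤ 2 * x / s := (one_le_div hs0).2 h2x
    have := Real.exp_pos (-(2 * x))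
    linarith
  · have key := exp_neg_cubic (2 * x) (by linarith)
    have h1 : 1 - Real.exp (-(2 * x)) ≤ 2 * x - 2 * x ^ 2 + 4 * x ^ 3 / 3 := by nlinarith
    have hnn : 0 ≤ 2 * x - x ^ 3 := by nlinarith
    have h2 : 2 * x - x ^ 3 ≤ 2 * x / s := by
      rw [le_div_iff₀ hs0]
      have hexpand : ((2 * x - x ^ 3) * s) ^ 2 = (2 * x - x ^ 3) ^ 2 * (1 + x ^ 2) := by
        rw [mul_pow, hs2]
      have h3 : 0 ≤ x ^ 6 * (3 - x ^ 2) := mul_nonneg (pow_nonneg hx 6) (by nlinarith)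
      have hsq : ((2 * x - x ^ 3) * s) ^ 2 ≤ (2 * x) ^ 2 := by nlinarith [hexpand, h3]
      calc (2 * x - x ^ 3) * s = Real.sqrt (((2 * x - x ^ 3) * s) ^ 2) :=
            (Real.sqrt_sq (mul_nonneg hnn hs0.le)).symm
        _ ≤ Real.sqrt ((2 * x) ^ 2) := Real.sqrt_le_sqrt hsq
        _ = 2 * x := Real.sqrt_sq (by linarith)
    nlinarith

set_option maxHeartbeats 1600000 in
/-- **Pointwise bounds for the scattering function** `f(r) = m(r)/r`: `f` is nondecreasing on
`(0,∞)`, satisfies `exp(-√(ζ₀/μ)) ≤ f(r) ≤ 1`, `0 ≤ 1 - f(r) ≤ min(1 - exp(-√(ζ₀/μ)), 𝔞₀^μ/r)`,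
and `f(r) ≤ (R₀ - 𝔞₀^μ)/R₀` on `(0, R₀]`; in particular `0 ≤ 𝔞₀^μ < R₀`.
Here `ζ₀ = R₀² ⨆ᵣ v(r)` and `𝔞₀^μ = R₀ - m(R₀)`. -/
theorem scattering_function_pointwise_bounds
    (R₀ μ : ℝ) (hR₀ : 0 < R₀) (hμ : 0 < μ)
    (v : ℝ → ℝ) (hv_meas : Measurable v) (hv_nonneg : ∀ r, 0 ≤ v r)
    (hv_bdd : BddAbove (Set.range v))
    (hv_supp : ∀ r, R₀ ≤ r → v r = 0)
    (m : ℝ → ℝ) (hm : ZeroEnergyScattering v R₀ μ m) :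
    MonotoneOn (fun r => m r / r) (Set.Ioi 0) ∧
    (∀ r, 0 < r →
      Real.exp (-Real.sqrt (R₀ ^ 2 * (⨆ r', v r') / μ)) ≤ m r / r ∧ m r / r ≤ 1) ∧
    (∀ r, 0 < r →
      0 ≤ 1 - m r / r ∧
      1 - m r / r ≤
        min (1 - Real.exp (-Real.sqrt (R₀ ^ 2 * (⨆ r', v r') / μ))) ((R₀ - m R₀) / r)) ∧
    (∀ r, 0 < r → r ≤ R₀ → m r / r ≤ (R₀ - (R₀ - m R₀)) / R₀) ∧
    (0 ≤ R₀ - m R₀ ∧ R₀ - m R₀ < R₀) := by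
  -- basic continuity / differentiability
  have hcontm : ContinuousOn m (Ioi 0) := hm.cont.mono Ioi_subset_Ici_self
  have hdiffm : DifferentiableOn ℝ m (Ioi 0) :=
    fun r hr => (hm.diff r hr).differentiableWithinAt
  have hdiffm' : DifferentiableOn ℝ (deriv m) (Ioi 0) :=
    fun r hr => (hm.diff2 r hr).differentiableWithinAt
  -- m tends to 0 at 0⁺
  have htend0 : Filter.Tendsto m (nhdsWithin 0 (Ioi 0)) (nhds 0) := by
    have h := (hm.cont 0 self_mem_Ici).tendsto
    rw [hm.zero] at h
    exact h.mono_left (nhdsWithin_mono 0 Ioi_subset_Ici_self)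
  -- second derivative formula and sign
  have hode : ∀ r ∈ Ioi (0 : ℝ), deriv (deriv m) r = v r * m r / μ := by
    intro r hr
    rw [eq_div_iff hμ.ne']
    have := hm.ode r hr
    linarith
  have hm''nonneg : ∀ r ∈ Ioi (0 : ℝ), 0 ≤ deriv (deriv m) r := by
    intro r hr
    rw [hode r hr]
    exact div_nonneg (mul_nonneg (hv_nonneg r) (hm.pos r hr).le) hμ.le
  -- deriv m is monotone on (0, ∞)
  have hmono' : MonotoneOn (deriv m) (Ioi 0) := by
    apply monotoneOn_of_deriv_nonneg (convex_Ioi 0) hm.derivCont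
    · rw [interior_Ioi]; exact hdiffm'
    · rw [interior_Ioi]; exact hm''nonneg
  -- deriv m = 1 beyond R₀
  have hm'eq1 : ∀ r, R₀ < r → deriv m r = 1 := by
    intro r hr
    have hev : m =ᶠ[nhds r] fun s => s - (R₀ - m R₀) := by
      filter_upwards [Ioi_mem_nhds hr] with s hs
      exact hm.radiation s (le_of_lt hs)
    rw [hev.deriv_eq]
    simp
  have hm'R₀ : deriv m R₀ = 1 := by
    have h1 : Filter.Tendsto (deriv m) (nhdsWithin R₀ (Ioi R₀)) (nhds (deriv m R₀)) :=
      ((hm.derivCont R₀ (mem_Ioi.2 hR₀)).mono (Ioi_subset_Ioi hR₀.le)).tendsto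
    have h2 : Filter.Tendsto (deriv m) (nhdsWithin R₀ (Ioi R₀)) (nhds 1) := by
      refine Filter.Tendsto.congr' ?_ tendsto_const_nhds
      filter_upwards [self_mem_nhdsWithin] with s hs
      exact (hm'eq1 s hs).symm
    exact tendsto_nhds_unique h1 h2
  -- deriv m ≤ 1
  have hm'le1 : ∀ r ∈ Ioi (0 : ℝ), deriv m r ≤ 1 := by
    intro r hr
    rcases le_or_gt r R₀ with h | h
    · have := hmono' hr (mem_Ioi.2 (by linarith : (0 : ℝ) < R₀ + 1)) (by linarith)
      rwa [hm'eq1 (R₀ + 1) (by linarith)] at this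
    · exact (hm'eq1 r h).le
  -- deriv m ≥ 0
  have hm'nonneg : ∀ r ∈ Ioi (0 : ℝ), 0 ≤ deriv m r := by
    intro r hr
    rw [mem_Ioi] at hr
    by_contra hneg
    push_neg at hneg
    have hanti : ∀ᶠ ε in nhdsWithin 0 (Ioi 0), m r ≤ m ε := by
      filter_upwards [Ioo_mem_nhdsGT_of_mem ⟨le_refl (0 : ℝ), hr⟩] with ε hε
      have hsub : Icc ε r ⊆ Ici 0 := fun s hs => le_trans hε.1.le hs.1
      have hA : AntitoneOn m (Icc ε r) := by
        apply antitoneOn_of_deriv_nonpos (convex_Icc ε r) (hm.cont.mono hsub)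
        · rw [interior_Icc]
          exact fun s hs => (hm.diff s (mem_Ioi.2 (lt_trans hε.1 hs.1))).differentiableWithinAt
        · rw [interior_Icc]
          intro s hs
          have h1 := hmono' (mem_Ioi.2 (lt_trans hε.1 hs.1)) (mem_Ioi.2 hr) hs.2.le
          linarith
      exact hA ⟨le_refl ε, hε.2.le⟩ ⟨hε.2.le.trans (le_refl r), le_refl r⟩ hε.2.le
    have : m r ≤ 0 := ge_of_tendsto htend0 hanti
    exact absurd this (not_le.2 (hm.pos r (mem_Ioi.2 hr)))
  -- m is monotone on [0, ∞)
  have hmmono : MonotoneOn m (Ici 0) := by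
    apply monotoneOn_of_deriv_nonneg (convex_Ici 0) hm.cont
    · rw [interior_Ici]; exact hdiffm
    · rw [interior_Ici]; exact hm'nonneg
  -- m r ≤ r
  have hmler : ∀ r, 0 ≤ r → m r ≤ r := by
    intro r hr
    have hmono2 : MonotoneOn (fun s => s - m s) (Ici 0) := by
      apply monotoneOn_of_deriv_nonneg (convex_Ici 0) (continuousOn_id.sub hm.cont)
      · rw [interior_Ici]
        exact fun s hs => (differentiableAt_id.sub (hm.diff s hs)).differentiableWithinAt
      · rw [interior_Ici]
        intro s hs
        rw [deriv_sub differentiableAt_id (hm.diff s hs)]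
        simp only [deriv_id]
        linarith [hm'le1 s hs]
    have := hmono2 self_mem_Ici (mem_Ici.2 hr) hr
    simp only [hm.zero, sub_zero] at this
    linarith
  have ha0 : 0 ≤ R₀ - m R₀ := by have := hmler R₀ hR₀.le; linarith
  have haR : R₀ - m R₀ < R₀ := by have := hm.pos R₀ (mem_Ioi.2 hR₀); linarith
  -- m r ≥ r - a
  have hm_ge : ∀ r, 0 ≤ r → r - (R₀ - m R₀) ≤ m r := by
    intro r hr
    rcases le_or_gt r R₀ with h | h
    · have hanti2 : AntitoneOn (fun s => m s - s) (Ici 0) := by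
        apply antitoneOn_of_deriv_nonpos (convex_Ici 0) (hm.cont.sub continuousOn_id)
        · rw [interior_Ici]
          exact fun s hs => ((hm.diff s hs).sub differentiableAt_id).differentiableWithinAt
        · rw [interior_Ici]
          intro s hs
          rw [deriv_sub (hm.diff s hs) differentiableAt_id]
          simp only [deriv_id]
          linarith [hm'le1 s hs]
      have := hanti2 (mem_Ici.2 hr) (mem_Ici.2 hR₀.le) h
      simp only at this
      linarith
    · rw [hm.radiation r h.le]
  -- positivity of ψ := m' r · r − m r
  have hψ : ∀ r ∈ Ioi (0 : ℝ), 0 ≤ deriv m r * r - m r := by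
    have hψdiff : ∀ s ∈ Ioi (0 : ℝ),
        HasDerivAt (fun t => deriv m t * t - m t) (deriv (deriv m) s * s) s := by
      intro s hs
      have h1 : HasDerivAt (fun t => deriv m t * t)
          (deriv (deriv m) s * s + deriv m s * 1) s :=
        ((hm.diff2 s hs).hasDerivAt).mul (hasDerivAt_id s)
      have h2 := h1.sub ((hm.diff s hs).hasDerivAt)
      refine h2.congr_deriv ?_
      ring
    have hψcont : ContinuousOn (fun t => deriv m t * t - m t) (Ioi 0) :=
      (hm.derivCont.mul continuousOn_id).sub hcontm
    have hψmono : MonotoneOn (fun t => deriv m t * t - m t) (Ioi 0) := by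
      refine monotoneOn_of_deriv_nonneg (convex_Ioi 0) hψcont ?_ ?_
      · rw [interior_Ioi]
        exact fun s hs => ((hψdiff s hs).differentiableAt).differentiableWithinAt
      · rw [interior_Ioi]
        intro s hs
        rw [(hψdiff s hs).deriv]
        exact mul_nonneg (hm''nonneg s hs) (le_of_lt hs)
    have hψtend : Filter.Tendsto (fun t => deriv m t * t - m t)
        (nhdsWithin 0 (Ioi 0)) (nhds 0) := by
      have hg : Filter.Tendsto (fun t : ℝ => -m t) (nhdsWithin 0 (Ioi 0)) (nhds 0) := by
        simpa using htend0.neg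
      have hh : Filter.Tendsto (fun t : ℝ => t - m t) (nhdsWithin 0 (Ioi 0)) (nhds 0) := by
        have hid : Filter.Tendsto (fun t : ℝ => t) (nhdsWithin 0 (Ioi 0)) (nhds 0) :=
          Filter.Tendsto.mono_left Filter.tendsto_id nhdsWithin_le_nhds
        simpa using hid.sub htend0
      refine tendsto_of_tendsto_of_tendsto_of_le_of_le' hg hh ?_ ?_
      · filter_upwards [self_mem_nhdsWithin] with t ht
        have := mul_nonneg (hm'nonneg t ht) (le_of_lt ht)
        linarith
      · filter_upwards [self_mem_nhdsWithin] with t ht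
        have h1 := hm'le1 t ht
        have h2 : deriv m t * t ≤ 1 * t := mul_le_mul_of_nonneg_right h1 (le_of_lt ht)
        linarith
    intro r hr
    refine le_of_tendsto hψtend ?_
    filter_upwards [Ioo_mem_nhdsGT_of_mem ⟨le_refl (0 : ℝ), hr⟩] with ε hε
    exact hψmono (mem_Ioi.2 hε.1) hr hε.2.le
  -- monotonicity of f
  have hfmono : MonotoneOn (fun r => m r / r) (Ioi 0) := by
    have hf_deriv : ∀ r ∈ Ioi (0 : ℝ),
        HasDerivAt (fun s => m s / s) ((deriv m r * r - m r * 1) / r ^ 2) r := by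
      intro r hr
      exact ((hm.diff r hr).hasDerivAt).div (hasDerivAt_id r) (ne_of_gt hr)
    refine monotoneOn_of_deriv_nonneg (convex_Ioi 0) ?_ ?_ ?_
    · exact hcontm.div continuousOn_id (fun s hs => ne_of_gt hs)
    · rw [interior_Ioi]
      exact fun s hs => ((hf_deriv s hs).differentiableAt).differentiableWithinAt
    · rw [interior_Ioi]
      intro s hs
      rw [(hf_deriv s hs).deriv]
      have := hψ s hs
      apply div_nonneg (by linarith) (sq_nonneg s)
  -- the supremum
  set ω := ⨆ r', v r' with hω_def
  have hωv : ∀ r, v r ≤ ω := fun r => le_ciSup hv_bdd r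
  have hω0 : 0 ≤ ω := le_trans (hv_nonneg 0) (hωv 0)
  clear_value ω
  obtain ⟨k, hk0, hk2⟩ : ∃ k, 0 ≤ k ∧ k ^ 2 = ω / μ :=
    ⟨Real.sqrt (ω / μ), Real.sqrt_nonneg _, Real.sq_sqrt (div_nonneg hω0 hμ.le)⟩
  have hxeq : Real.sqrt (R₀ ^ 2 * ω / μ) = k * R₀ := by
    have hrw : R₀ ^ 2 * ω / μ = (k * R₀) ^ 2 := by
      rw [mul_div_assoc, ← hk2]; ring
    rw [hrw, Real.sqrt_sq (mul_nonneg hk0 hR₀.le)]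
  -- the key exponential lower bound
  have hkey : ∀ r, 0 < r → r ≤ R₀ → Real.exp (-(k * R₀)) * r ≤ m r := by
    have hexp1 : Real.exp (-(k * R₀)) ≤ 1 :=
      Real.exp_le_one_iff.2 (neg_nonpos.2 (mul_nonneg hk0 hR₀.le))
    rcases eq_or_lt_of_le hω0 with hωz | hωpos
    · -- ω = 0 : v ≡ 0 and m r = r
      have hv0 : ∀ s, v s = 0 := fun s => le_antisymm (hωz ▸ hωv s) (hv_nonneg s)
      have hm'ge1 : ∀ s ∈ Ioi (0 : ℝ), 1 ≤ deriv m s := by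
        have hanti' : AntitoneOn (deriv m) (Ioi 0) := by
          apply antitoneOn_of_deriv_nonpos (convex_Ioi 0) hm.derivCont
          · rw [interior_Ioi]; exact hdiffm'
          · rw [interior_Ioi]
            intro s hs
            rw [hode s hs, hv0 s]
            simp
        intro s hs
        rcases le_or_gt s R₀ with h | h
        · have := hanti' hs (mem_Ioi.2 (by linarith : (0 : ℝ) < R₀ + 1)) (by linarith)
          rwa [hm'eq1 (R₀ + 1) (by linarith)] at this
        · exact (hm'eq1 s h).ge
      have hge : ∀ r, 0 ≤ r → r ≤ m r := by
        intro r hr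
        have hmono2 : MonotoneOn (fun s => m s - s) (Ici 0) := by
          apply monotoneOn_of_deriv_nonneg (convex_Ici 0) (hm.cont.sub continuousOn_id)
          · rw [interior_Ici]
            exact fun s hs => ((hm.diff s hs).sub differentiableAt_id).differentiableWithinAt
          · rw [interior_Ici]
            intro s hs
            rw [deriv_sub (hm.diff s hs) differentiableAt_id]
            simp only [deriv_id]
            linarith [hm'ge1 s hs]
        have := hmono2 self_mem_Ici (mem_Ici.2 hr) hr
        simp only [hm.zero] at this
        linarith
      intro r hr _
      calc Real.exp (-(k * R₀)) * r ≤ 1 * r := mul_le_mul_of_nonneg_right hexp1 hr.le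
        _ ≤ m r := by linarith [hge r hr.le]
    · -- ω > 0
      have hkpos : 0 < k := by
        rcases hk0.lt_or_eq with h | h
        · exact h
        · exfalso
          rw [← h] at hk2
          have := div_pos hωpos hμ
          simp at hk2
          linarith
      have hMpos : 0 < m R₀ := hm.pos R₀ (mem_Ioi.2 hR₀)
      have hPderiv : ∀ s ∈ Ioi (0 : ℝ),
          HasDerivAt (fun t => (deriv m t) ^ 2 - ω / μ * (m t) ^ 2)
            (2 * deriv m s * deriv (deriv m) s - ω / μ * (2 * m s * deriv m s)) s := by
        intro s hs
        have h1 : HasDerivAt (fun t => (deriv m t) ^ 2)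
            ((2 : ℕ) * deriv m s ^ 1 * deriv (deriv m) s) s :=
          (hm.diff2 s hs).hasDerivAt.pow 2
        have h2 : HasDerivAt (fun t => (m t) ^ 2) ((2 : ℕ) * m s ^ 1 * deriv m s) s :=
          (hm.diff s hs).hasDerivAt.pow 2
        have h3 := h1.sub (h2.const_mul (ω / μ))
        refine h3.congr_deriv ?_
        push_cast
        ring
      have hPanti : AntitoneOn (fun t => (deriv m t) ^ 2 - ω / μ * (m t) ^ 2) (Ioi 0) := by
        refine antitoneOn_of_deriv_nonpos (convex_Ioi 0) ?_ ?_ ?_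
        · exact (hm.derivCont.pow 2).sub (continuousOn_const.mul (hcontm.pow 2))
        · rw [interior_Ioi]
          exact fun s hs => ((hPderiv s hs).differentiableAt).differentiableWithinAt
        · rw [interior_Ioi]
          intro s hs
          rw [(hPderiv s hs).deriv, hode s hs]
          have hrw : 2 * deriv m s * (v s * m s / μ) - ω / μ * (2 * m s * deriv m s)
              = 2 * deriv m s * m s * (v s - ω) / μ := by ring
          rw [hrw]
          apply div_nonpos_of_nonpos_of_nonneg ?_ hμ.le
          have h1 := hm'nonneg s hs
          have h2 := (hm.pos s hs).le
          have h3 := hωv s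
          have h4 : deriv m s * m s * (v s - ω) ≤ 0 :=
            mul_nonpos_of_nonneg_of_nonpos (mul_nonneg h1 h2) (by linarith)
          nlinarith [h4]
      have hPbound : ∀ s, 0 < s → s ≤ R₀ → 1 - ω / μ * (m R₀) ^ 2 ≤ (deriv m s) ^ 2 := by
        intro s h1 h2
        have hcomp := hPanti (mem_Ioi.2 h1) (mem_Ioi.2 hR₀) h2
        simp only [hm'R₀, one_pow] at hcomp
        have hnn : 0 ≤ ω / μ * (m s) ^ 2 :=
          mul_nonneg (div_nonneg hω0 hμ.le) (sq_nonneg _)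
        linarith
      have hMbig : 1 - Real.exp (-(2 * (k * R₀))) ≤ 2 * (k * m R₀) := by
        rcases le_or_gt 1 (k * m R₀) with hc | hc
        · have := Real.exp_pos (-(2 * (k * R₀))); linarith
        · have hsq0 : 0 ≤ 1 - (k * m R₀) ^ 2 := by nlinarith [mul_nonneg hk0 hMpos.le]
          obtain ⟨c, hc0, hc2⟩ : ∃ c, 0 ≤ c ∧ c ^ 2 = 1 - (k * m R₀) ^ 2 :=
            ⟨Real.sqrt (1 - (k * m R₀) ^ 2), Real.sqrt_nonneg _, Real.sq_sqrt hsq0⟩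
          have hm'gec : ∀ s, 0 < s → s ≤ R₀ → c ≤ deriv m s := by
            intro s h1 h2
            have hb := hPbound s h1 h2
            have hd0 := hm'nonneg s (mem_Ioi.2 h1)
            nlinarith [hk2, hc2, hb, hc0, hd0]
          have hMc : c * R₀ ≤ m R₀ := by
            have hev : ∀ᶠ ε in nhdsWithin 0 (Ioi 0), m ε - c * ε ≤ m R₀ - c * R₀ := by
              filter_upwards [Ioo_mem_nhdsGT_of_mem ⟨le_refl (0 : ℝ), hR₀⟩] with ε hε
              have hmono3 : MonotoneOn (fun s => m s - c * s) (Icc ε R₀) := by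
                refine monotoneOn_of_deriv_nonneg (convex_Icc ε R₀) ?_ ?_ ?_
                · exact (hm.cont.mono (fun s hs => le_trans hε.1.le hs.1)).sub
                    (continuousOn_const.mul continuousOn_id)
                · rw [interior_Icc]
                  exact fun s hs => ((hm.diff s (mem_Ioi.2 (lt_trans hε.1 hs.1))).sub
                    ((differentiableAt_const c).mul differentiableAt_id)).differentiableWithinAt
                · rw [interior_Icc]
                  intro s hs
                  have hd := hm.diff s (mem_Ioi.2 (lt_trans hε.1 hs.1))
                  have hds : HasDerivAt (fun t => m t - c * t) (deriv m s - c * 1) s :=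
                    hd.hasDerivAt.sub ((hasDerivAt_id s).const_mul c)
                  rw [hds.deriv]
                  have := hm'gec s (lt_trans hε.1 hs.1) hs.2.le
                  linarith
              exact hmono3 ⟨le_refl ε, hε.2.le⟩ ⟨hε.2.le, le_refl R₀⟩ hε.2.le
            have htlim : Filter.Tendsto (fun ε => m ε - c * ε)
                (nhdsWithin 0 (Ioi 0)) (nhds 0) := by
              have hid : Filter.Tendsto (fun t : ℝ => c * t)
                  (nhdsWithin 0 (Ioi 0)) (nhds 0) := by
                have hcont : Continuous fun t : ℝ => c * t := continuous_const.mul continuous_id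
                have := (hcont.tendsto 0).mono_left
                  (nhdsWithin_le_nhds : nhdsWithin (0 : ℝ) (Ioi 0) ≤ nhds 0)
                simpa using this
              simpa using htend0.sub hid
            have := le_of_tendsto htlim hev
            linarith
          have hsqc : (c * R₀) ^ 2 ≤ (m R₀) ^ 2 :=
            pow_le_pow_left₀ (mul_nonneg hc0 hR₀.le) hMc 2
          have hc2R : c ^ 2 * R₀ ^ 2 = (1 - (k * m R₀) ^ 2) * R₀ ^ 2 := by rw [hc2]
          have h1 : R₀ ^ 2 ≤ (m R₀) ^ 2 * (1 + (k * R₀) ^ 2) := by nlinarith [hsqc, hc2R]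
          have hs1pos : (0 : ℝ) < Real.sqrt (1 + (k * R₀) ^ 2) :=
            Real.sqrt_pos.2 (by positivity)
          have hMx : k * R₀ ≤ k * m R₀ * Real.sqrt (1 + (k * R₀) ^ 2) := by
            calc k * R₀ = Real.sqrt ((k * R₀) ^ 2) :=
                  (Real.sqrt_sq (mul_nonneg hk0 hR₀.le)).symm
              _ ≤ Real.sqrt ((k * m R₀) ^ 2 * (1 + (k * R₀) ^ 2)) := by
                  apply Real.sqrt_le_sqrt
                  nlinarith [sq_nonneg k, h1]
              _ = k * m R₀ * Real.sqrt (1 + (k * R₀) ^ 2) := by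
                  rw [Real.sqrt_mul (sq_nonneg _), Real.sqrt_sq (mul_nonneg hk0 hMpos.le)]
          have hL1 := one_sub_exp_le_aux (k * R₀) (mul_nonneg hk0 hR₀.le)
          have h2 : 2 * (k * R₀) / Real.sqrt (1 + (k * R₀) ^ 2) ≤ 2 * (k * m R₀) := by
            rw [div_le_iff₀ hs1pos]
            linarith [hMx]
          linarith
      have hsinh_deriv : ∀ s : ℝ,
          HasDerivAt (fun t => Real.sinh (k * t)) (k * Real.cosh (k * s)) s := by
        intro s
        have := (Real.hasDerivAt_sinh (k * s)).comp s ((hasDerivAt_id s).const_mul k)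
        exact this.congr_deriv (by ring)
      have hcosh_deriv : ∀ s : ℝ,
          HasDerivAt (fun t => Real.cosh (k * t)) (k * Real.sinh (k * s)) s := by
        intro s
        have := (Real.hasDerivAt_cosh (k * s)).comp s ((hasDerivAt_id s).const_mul k)
        exact this.congr_deriv (by ring)
      have hWderiv : ∀ s ∈ Ioi (0 : ℝ),
          HasDerivAt (fun t => deriv m t * Real.sinh (k * t) - m t * (k * Real.cosh (k * t)))
            (deriv (deriv m) s * Real.sinh (k * s) - m s * (k * (k * Real.sinh (k * s)))) s := by
        intro s hs
        have h1 := ((hm.diff2 s hs).hasDerivAt).mul (hsinh_deriv s)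
        have h2 := ((hm.diff s hs).hasDerivAt).mul ((hcosh_deriv s).const_mul k)
        have h3 := h1.sub h2
        refine h3.congr_deriv ?_
        ring
      have hWcont : ContinuousOn
          (fun t => deriv m t * Real.sinh (k * t) - m t * (k * Real.cosh (k * t)))
          (Ioi 0) := by
        apply ContinuousOn.sub
        · exact hm.derivCont.mul
            ((Real.continuous_sinh.comp (continuous_const.mul continuous_id)).continuousOn)
        · exact hcontm.mul ((continuous_const.mul (Real.continuous_cosh.comp
            (continuous_const.mul continuous_id))).continuousOn)
      have hWanti : AntitoneOn
          (fun t => deriv m t * Real.sinh (k * t) - m t * (k * Real.cosh (k * t)))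
          (Ioi 0) := by
        refine antitoneOn_of_deriv_nonpos (convex_Ioi 0) hWcont ?_ ?_
        · rw [interior_Ioi]
          exact fun s hs => ((hWderiv s hs).differentiableAt).differentiableWithinAt
        · rw [interior_Ioi]
          intro s hs
          rw [(hWderiv s hs).deriv, hode s hs]
          have hsinh0 : 0 ≤ Real.sinh (k * s) :=
            Real.sinh_nonneg_iff.2 (mul_nonneg hk0 (le_of_lt hs))
          have hrw : v s * m s / μ * Real.sinh (k * s) - m s * (k * (k * Real.sinh (k * s)))
              = m s * Real.sinh (k * s) * (v s / μ - k ^ 2) := by ring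
          rw [hrw, hk2]
          apply mul_nonpos_of_nonneg_of_nonpos
          · exact mul_nonneg (hm.pos s hs).le hsinh0
          · have hvs : v s / μ ≤ ω / μ := by
              gcongr
              exact hωv s
            linarith
      have hWtend : Filter.Tendsto
          (fun t => deriv m t * Real.sinh (k * t) - m t * (k * Real.cosh (k * t)))
          (nhdsWithin 0 (Ioi 0)) (nhds 0) := by
        have hg : Filter.Tendsto (fun t : ℝ => -(m t * (k * Real.cosh (k * t))))
            (nhdsWithin 0 (Ioi 0)) (nhds 0) := by
          have hc : Filter.Tendsto (fun t : ℝ => k * Real.cosh (k * t))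
              (nhdsWithin 0 (Ioi 0)) (nhds (k * Real.cosh (k * 0))) :=
            ((continuous_const.mul (Real.continuous_cosh.comp
              (continuous_const.mul continuous_id))).tendsto 0).mono_left nhdsWithin_le_nhds
          have := (htend0.mul hc).neg
          simpa using this
        have hh : Filter.Tendsto (fun t : ℝ => Real.sinh (k * t))
            (nhdsWithin 0 (Ioi 0)) (nhds 0) := by
          have hcont : Continuous fun t : ℝ => Real.sinh (k * t) :=
            Real.continuous_sinh.comp (continuous_const.mul continuous_id)
          have := (hcont.tendsto 0).mono_left
            (nhdsWithin_le_nhds : nhdsWithin (0 : ℝ) (Ioi 0) ≤ nhds 0)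
          simpa using this
        refine tendsto_of_tendsto_of_tendsto_of_le_of_le' hg hh ?_ ?_
        · filter_upwards [self_mem_nhdsWithin] with t ht
          have h1 : 0 ≤ deriv m t * Real.sinh (k * t) :=
            mul_nonneg (hm'nonneg t ht) (Real.sinh_nonneg_iff.2 (mul_nonneg hk0 (le_of_lt ht)))
          linarith
        · filter_upwards [self_mem_nhdsWithin] with t ht
          have hsinh0 : 0 ≤ Real.sinh (k * t) :=
            Real.sinh_nonneg_iff.2 (mul_nonneg hk0 (le_of_lt ht))
          have h1 : deriv m t * Real.sinh (k * t) ≤ 1 * Real.sinh (k * t) :=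
            mul_le_mul_of_nonneg_right (hm'le1 t ht) hsinh0
          have h2 : 0 ≤ m t * (k * Real.cosh (k * t)) :=
            mul_nonneg (hm.pos t ht).le (mul_nonneg hk0 (Real.cosh_pos _).le)
          linarith
      have hWle : ∀ s ∈ Ioi (0 : ℝ),
          deriv m s * Real.sinh (k * s) - m s * (k * Real.cosh (k * s)) ≤ 0 := by
        intro s hs
        refine ge_of_tendsto hWtend ?_
        filter_upwards [Ioo_mem_nhdsGT_of_mem ⟨le_refl (0 : ℝ), hs⟩] with ε hε
        exact hWanti (mem_Ioi.2 hε.1) hs hε.2.le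
      have hqanti : AntitoneOn (fun t => m t / Real.sinh (k * t)) (Ioi 0) := by
        have hq_deriv : ∀ s ∈ Ioi (0 : ℝ),
            HasDerivAt (fun t => m t / Real.sinh (k * t))
              ((deriv m s * Real.sinh (k * s) - m s * (k * Real.cosh (k * s))) /
                (Real.sinh (k * s)) ^ 2) s := by
          intro s hs
          exact ((hm.diff s hs).hasDerivAt).div (hsinh_deriv s)
            (ne_of_gt (Real.sinh_pos_iff.2 (mul_pos hkpos hs)))
        refine antitoneOn_of_deriv_nonpos (convex_Ioi 0) ?_ ?_ ?_
        · exact hcontm.div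
            ((Real.continuous_sinh.comp (continuous_const.mul continuous_id)).continuousOn)
            (fun s hs => ne_of_gt (Real.sinh_pos_iff.2 (mul_pos hkpos hs)))
        · rw [interior_Ioi]
          exact fun s hs => ((hq_deriv s hs).differentiableAt).differentiableWithinAt
        · rw [interior_Ioi]
          intro s hs
          rw [(hq_deriv s hs).deriv]
          exact div_nonpos_of_nonpos_of_nonneg (hWle s hs) (sq_nonneg _)
      intro r hr hrR
      have hsinhr : 0 < Real.sinh (k * r) := Real.sinh_pos_iff.2 (mul_pos hkpos hr)
      have hsinhR : 0 < Real.sinh (k * R₀) := Real.sinh_pos_iff.2 (mul_pos hkpos hR₀)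
      have hq := hqanti (mem_Ioi.2 hr) (mem_Ioi.2 hR₀) hrR
      rw [div_le_div_iff₀ hsinhR hsinhr] at hq
      have hkrle : k * r ≤ Real.sinh (k * r) :=
        Real.self_le_sinh_iff.2 (mul_nonneg hk0 hr.le)
      have hes : Real.exp (-(k * R₀)) * Real.sinh (k * R₀)
          = (1 - Real.exp (-(2 * (k * R₀)))) / 2 := by
        have e1 : Real.exp (-(k * R₀)) * Real.exp (k * R₀) = 1 := by
          rw [← Real.exp_add]; simp
        have e2 : Real.exp (-(k * R₀)) * Real.exp (-(k * R₀))
            = Real.exp (-(2 * (k * R₀))) := by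
          rw [← Real.exp_add]; congr 1; ring
        have hsplit : Real.exp (-(k * R₀)) * ((Real.exp (k * R₀) - Real.exp (-(k * R₀))) / 2)
            = (Real.exp (-(k * R₀)) * Real.exp (k * R₀)
              - Real.exp (-(k * R₀)) * Real.exp (-(k * R₀))) / 2 := by ring
        rw [Real.sinh_eq, hsplit, e1, e2]
      have hfinal : Real.exp (-(k * R₀)) * Real.sinh (k * R₀) ≤ k * m R₀ := by
        rw [hes]; linarith [hMbig]
      have hchain : Real.exp (-(k * R₀)) * r * Real.sinh (k * R₀)
          ≤ m r * Real.sinh (k * R₀) := by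
        calc Real.exp (-(k * R₀)) * r * Real.sinh (k * R₀)
            = (Real.exp (-(k * R₀)) * Real.sinh (k * R₀)) * r := by ring
          _ ≤ (k * m R₀) * r := mul_le_mul_of_nonneg_right hfinal hr.le
          _ = m R₀ * (k * r) := by ring
          _ ≤ m R₀ * Real.sinh (k * r) := mul_le_mul_of_nonneg_left hkrle hMpos.le
          _ ≤ m r * Real.sinh (k * R₀) := hq
      exact le_of_mul_le_mul_right hchain hsinhR
  have hlow : ∀ r, 0 < r → Real.exp (-(k * R₀)) ≤ m r / r := by
    intro r hr
    rcases le_or_gt r R₀ with h | h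
    · rw [le_div_iff₀ hr]
      exact hkey r hr h
    · have h1 : m R₀ / R₀ ≤ m r / r :=
        hfmono (mem_Ioi.2 hR₀) (mem_Ioi.2 (hR₀.trans h)) h.le
      have h2 : Real.exp (-(k * R₀)) ≤ m R₀ / R₀ := by
        rw [le_div_iff₀ hR₀]
        exact hkey R₀ hR₀ le_rfl
      linarith
  refine ⟨hfmono, fun r hr => ⟨?_, ?_⟩, fun r hr => ⟨?_, ?_⟩, fun r hr hrR => ?_, ha0, haR⟩
  · rw [hxeq]; exact hlow r hr
  · exact (div_le_one hr).2 (hmler r hr.le)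
  · have := (div_le_one hr).2 (hmler r hr.le); linarith
  · refine le_min ?_ ?_
    · rw [hxeq]
      have := hlow r hr
      linarith
    · have heq : 1 - m r / r = (r - m r) / r := by field_simp
      rw [heq, div_le_div_iff₀ hr hr]
      nlinarith [hm_ge r hr.le]
  · have heq : R₀ - (R₀ - m R₀) = m R₀ := by ring
    rw [heq]
    exact hfmono (mem_Ioi.2 hr) (mem_Ioi.2 hR₀) hrR
end

section
/- The scattering function f(r) = m(r)/r is differentiable on (0,∞) and its derivative satisfies, for every r > 0, 0 ≤ f'(r) ≤ 𝔞₀^μ/r² and f'(r) ≤ (1 − c₁^μ)/r, where c₁^μ := lim_{r→0⁺} f(r) = inf_{r>0} f(r). -/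
open Set MeasureTheory

/-- **Gradient bounds for the scattering function** `f(r) = m(r)/r`: `f` is differentiable on
`(0,∞)`, `f(r) → c₁^μ := inf_{r>0} f(r)` as `r → 0⁺`, and for every `r > 0` one has
`0 ≤ f'(r) ≤ 𝔞₀^μ/r²` and `f'(r) ≤ (1 - c₁^μ)/r`. -/
theorem scattering_function_gradient_bounds
    (R₀ μ : ℝ) (hR₀ : 0 < R₀) (hμ : 0 < μ)
    (v : ℝ → ℝ) (hv_meas : Measurable v) (hv_nonneg : ∀ r, 0 ≤ v r)
    (hv_bdd : BddAbove (Set.range v))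
    (hv_supp : ∀ r, R₀ ≤ r → v r = 0)
    (m : ℝ → ℝ) (hm : ZeroEnergyScattering v R₀ μ m) :
    (∀ r, 0 < r → DifferentiableAt ℝ (fun s => m s / s) r) ∧
    Filter.Tendsto (fun r => m r / r) (nhdsWithin 0 (Set.Ioi 0))
      (nhds (⨅ r : Set.Ioi (0 : ℝ), m (r : ℝ) / (r : ℝ))) ∧
    (∀ r, 0 < r →
      0 ≤ deriv (fun s => m s / s) r ∧
      deriv (fun s => m s / s) r ≤ (R₀ - m R₀) / r ^ 2 ∧
      deriv (fun s => m s / s) r ≤ (1 - ⨅ r' : Set.Ioi (0 : ℝ), m (r' : ℝ) / (r' : ℝ)) / r) := by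
  obtain ⟨cont, diff, derivCont, diff2, ode, zero, pos, radiation⟩ := hm
  -- second derivative nonnegative
  have hdd : ∀ r ∈ Ioi (0 : ℝ), 0 ≤ deriv (deriv m) r := by
    intro r hr
    have h1 := ode r hr
    have h2 := mul_nonneg (hv_nonneg r) (pos r hr).le
    nlinarith
  -- m' is monotone on (0,∞)
  have hmono' : MonotoneOn (deriv m) (Ioi 0) := by
    apply monotoneOn_of_deriv_nonneg (convex_Ioi 0) derivCont
    · rw [interior_Ioi]
      exact fun r hr => (diff2 r hr).differentiableWithinAt
    · rw [interior_Ioi]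
      exact hdd
  -- m' = 1 beyond R₀
  have hderiv_one : ∀ r, R₀ < r → deriv m r = 1 := by
    intro r hr
    have hev : m =ᶠ[nhds r] fun s => s - (R₀ - m R₀) := by
      filter_upwards [Ioi_mem_nhds hr] with s hs
      exact radiation s (le_of_lt hs)
    rw [hev.deriv_eq]
    simp
  -- m' ≤ 1 on (0,∞)
  have hd_le_one : ∀ r, 0 < r → deriv m r ≤ 1 := by
    intro r hr
    have hR : R₀ < max r R₀ + 1 := lt_of_le_of_lt (le_max_right r R₀) (lt_add_one _)
    have hrR : r ≤ max r R₀ + 1 := le_trans (le_max_left r R₀) (le_of_lt (lt_add_one _))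
    calc deriv m r ≤ deriv m (max r R₀ + 1) :=
          hmono' (mem_Ioi.mpr hr) (mem_Ioi.mpr (lt_trans hR₀ hR)) hrR
      _ = 1 := hderiv_one _ hR
  -- the Wronskian-like function g r = r m'(r) - m(r)
  have hg_has : ∀ r ∈ Ioi (0 : ℝ),
      HasDerivAt (fun s => s * deriv m s - m s) (r * deriv (deriv m) r) r := by
    intro r hr
    have h1 : HasDerivAt (fun s => s * deriv m s)
        (1 * deriv m r + r * deriv (deriv m) r) r :=
      (hasDerivAt_id r).mul (diff2 r hr).hasDerivAt
    have h2 := (diff r hr).hasDerivAt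
    have h3 := h1.sub h2
    have h4 : r * deriv (deriv m) r = 1 * deriv m r + r * deriv (deriv m) r - deriv m r := by ring
    rw [h4]; exact h3
  have hg_mono : MonotoneOn (fun s => s * deriv m s - m s) (Ioi 0) := by
    apply monotoneOn_of_deriv_nonneg (convex_Ioi 0)
    · exact (continuousOn_id.mul derivCont).sub (cont.mono Ioi_subset_Ici_self)
    · rw [interior_Ioi]
      exact fun r hr => (hg_has r hr).differentiableAt.differentiableWithinAt
    · rw [interior_Ioi]
      intro r hr
      rw [(hg_has r hr).deriv]
      exact mul_nonneg (le_of_lt hr) (hdd r hr)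
  have hg_eq : ∀ r, R₀ < r → r * deriv m r - m r = R₀ - m R₀ := by
    intro r hr
    rw [hderiv_one r hr, radiation r hr.le]
    ring
  have hg_le : ∀ r, 0 < r → r * deriv m r - m r ≤ R₀ - m R₀ := by
    intro r hr
    have hR : R₀ < max r R₀ + 1 := lt_of_le_of_lt (le_max_right r R₀) (lt_add_one _)
    have hrR : r ≤ max r R₀ + 1 := le_trans (le_max_left r R₀) (le_of_lt (lt_add_one _))
    calc r * deriv m r - m r ≤ (max r R₀ + 1) * deriv m (max r R₀ + 1) - m (max r R₀ + 1) :=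
          hg_mono (mem_Ioi.mpr hr) (mem_Ioi.mpr (lt_trans hR₀ hR)) hrR
      _ = R₀ - m R₀ := hg_eq _ hR
  -- g ≥ 0 via the mean value theorem
  have hg_nonneg : ∀ r, 0 < r → 0 ≤ r * deriv m r - m r := by
    intro r hr
    obtain ⟨c, hc, hceq⟩ := exists_deriv_eq_slope m hr
      (cont.mono (Icc_subset_Ici_self))
      (fun x hx => (diff x hx.1).differentiableWithinAt)
    have hcr : deriv m c ≤ deriv m r := hmono' (mem_Ioi.mpr hc.1) (mem_Ioi.mpr hr) hc.2.le
    rw [zero] at hceq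
    have hmr : m r = deriv m c * r := by
      rw [sub_zero, sub_zero, eq_div_iff (ne_of_gt hr)] at hceq
      linarith
    nlinarith
  -- differentiability of f
  have hf_has : ∀ r, 0 < r →
      HasDerivAt (fun s => m s / s) ((r * deriv m r - m r) / r ^ 2) r := by
    intro r hr
    have h := (diff r (mem_Ioi.mpr hr)).hasDerivAt.div (hasDerivAt_id r) (ne_of_gt hr)
    rw [show (r * deriv m r - m r) / r ^ 2 = (deriv m r * id r - m r * 1) / id r ^ 2 by simp only [id, mul_one]; ring]
    exact h
  have hf_diff : ∀ r, 0 < r → DifferentiableAt ℝ (fun s => m s / s) r :=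
    fun r hr => (hf_has r hr).differentiableAt
  have hf_deriv : ∀ r, 0 < r →
      deriv (fun s => m s / s) r = (r * deriv m r - m r) / r ^ 2 :=
    fun r hr => (hf_has r hr).deriv
  -- f is monotone on (0,∞)
  have hf_mono : MonotoneOn (fun s => m s / s) (Ioi 0) := by
    apply monotoneOn_of_deriv_nonneg (convex_Ioi 0)
    · exact ContinuousOn.div (cont.mono Ioi_subset_Ici_self) continuousOn_id
        (fun r hr => ne_of_gt hr)
    · rw [interior_Ioi]
      exact fun r hr => (hf_diff r hr).differentiableWithinAt
    · rw [interior_Ioi]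
      intro r hr
      rw [hf_deriv r hr]
      exact div_nonneg (hg_nonneg r hr) (sq_nonneg r)
  -- boundedness below of f
  have hbdd : BddBelow ((fun s => m s / s) '' Ioi 0) := by
    refine ⟨0, fun x hx => ?_⟩
    obtain ⟨r, hr, rfl⟩ := hx
    exact div_nonneg (pos r hr).le (le_of_lt hr)
  have hbdd' : BddBelow (Set.range fun r : Set.Ioi (0 : ℝ) => m (r : ℝ) / (r : ℝ)) := by
    refine ⟨0, fun x hx => ?_⟩
    obtain ⟨⟨r, hr⟩, rfl⟩ := hx
    exact div_nonneg (pos r hr).le (le_of_lt hr)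
  have hinf_eq : sInf ((fun s => m s / s) '' Ioi 0)
      = ⨅ r : Set.Ioi (0 : ℝ), m (r : ℝ) / (r : ℝ) := by
    rw [Set.image_eq_range, sInf_range]
  refine ⟨hf_diff, ?_, ?_⟩
  · have := hf_mono.tendsto_nhdsGT hbdd
    rwa [hinf_eq] at this
  · intro r hr
    have hinf_le : (⨅ r' : Set.Ioi (0 : ℝ), m (r' : ℝ) / (r' : ℝ)) ≤ m r / r :=
      ciInf_le hbdd' ⟨r, hr⟩
    have hr2 : (0 : ℝ) < r ^ 2 := pow_pos hr 2
    refine ⟨?_, ?_, ?_⟩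
    · rw [hf_deriv r hr]
      exact div_nonneg (hg_nonneg r hr) hr2.le
    · rw [hf_deriv r hr]
      exact div_le_div_of_nonneg_right (hg_le r hr) hr2.le |>.trans_eq rfl
    · rw [hf_deriv r hr]
      set c₁ := ⨅ r' : Set.Ioi (0 : ℝ), m (r' : ℝ) / (r' : ℝ)
      have h1 : r * deriv m r - m r ≤ r * (1 - c₁) := by
        have h2 : r * c₁ ≤ m r := by
          have := mul_le_mul_of_nonneg_left hinf_le hr.le
          rwa [mul_div_cancel₀ (m r) (ne_of_gt hr)] at this
        have h3 : r * deriv m r ≤ r * 1 := mul_le_mul_of_nonneg_left (hd_le_one r hr) hr.le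
        nlinarith
      calc (r * deriv m r - m r) / r ^ 2 ≤ r * (1 - c₁) / r ^ 2 :=
            div_le_div_of_nonneg_right h1 hr2.le |>.trans_eq rfl
        _ = (1 - c₁) / r := by
            rw [sq]
            rw [mul_div_mul_left _ _ (ne_of_gt hr)]
end

section
/- There is a constant C > 0, independent of μ and of v, such that the derivative of the scattering function satisfies the uniform bound 0 ≤ f'(r) ≤ (C/(r² + R₀²)) · (𝔞₀^μ + ζ₀ (𝔠₀ − 𝔞₀^μ)/μ) for all r > 0. (One may take C = 2.) -/
open Set MeasureTheory

/-- **Uniform gradient bound for the scattering function.**  There is a universal constant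
`C > 0` (independent of `μ` and of `v`; one may take `C = 2`) such that
`0 ≤ f'(r) ≤ C/(r² + R₀²) · (𝔞₀^μ + ζ₀ (𝔠₀ - 𝔞₀^μ)/μ)` for all `r > 0`, where
`f(r) = m(r)/r`, `𝔠₀ = R₀` and `ζ₀ = R₀² ⨆ᵣ v(r)`. -/
theorem scattering_function_uniform_gradient_bound :
    ∃ C > (0 : ℝ), ∀ R₀ μ : ℝ, 0 < R₀ → 0 < μ →
      ∀ v : ℝ → ℝ, Measurable v → (∀ r, 0 ≤ v r) → BddAbove (Set.range v) →
        (∀ r, R₀ ≤ r → v r = 0) →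
      ∀ m : ℝ → ℝ, ZeroEnergyScattering v R₀ μ m →
      ∀ r, 0 < r →
        0 ≤ deriv (fun s => m s / s) r ∧
        deriv (fun s => m s / s) r ≤
          C / (r ^ 2 + R₀ ^ 2) *
            ((R₀ - m R₀) + R₀ ^ 2 * (⨆ r', v r') * (R₀ - (R₀ - m R₀)) / μ) := by
  refine ⟨2, two_pos, ?_⟩
  intro R₀ μ hR₀ hμ v hv_meas hv_nonneg hv_bdd hv_supp m hm r hr
  obtain ⟨cont, diff, derivCont, diff2, ode, zero, pos, radiation⟩ := hm
  set a : ℝ := R₀ - m R₀ with ha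
  set V : ℝ := ⨆ r', v r' with hV
  have hvle : ∀ s, v s ≤ V := fun s => le_ciSup hv_bdd s
  have hV0 : (0 : ℝ) ≤ V := (hv_nonneg 0).trans (hvle 0)
  have hmR₀ : 0 < m R₀ := pos R₀ hR₀
  -- second derivative formula
  have hd2 : ∀ s ∈ Ioi (0:ℝ), deriv (deriv m) s = v s * m s / μ := by
    intro s hs
    have h := ode s hs
    field_simp
    linarith [h]
  have hd2nonneg : ∀ s ∈ Ioi (0:ℝ), 0 ≤ deriv (deriv m) s := by
    intro s hs
    rw [hd2 s hs]
    exact div_nonneg (mul_nonneg (hv_nonneg s) (pos s hs).le) hμ.le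
  -- deriv m is monotone on (0,∞)
  have hmono' : MonotoneOn (deriv m) (Ioi 0) := by
    apply monotoneOn_of_deriv_nonneg (convex_Ioi 0) derivCont
    · rw [interior_Ioi]
      exact fun x hx => (diff2 x hx).differentiableWithinAt
    · rw [interior_Ioi]
      exact hd2nonneg
  -- deriv m = 1 above R₀
  have hderiv1 : ∀ s, R₀ < s → deriv m s = 1 := by
    intro s hs
    have hev : m =ᶠ[nhds s] (fun t => t - a) := by
      filter_upwards [Ioi_mem_nhds hs] with t ht
      exact radiation t (le_of_lt ht)
    rw [hev.deriv_eq]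
    have : HasDerivAt (fun t : ℝ => t - a) 1 s := (hasDerivAt_id s).sub_const a
    exact this.deriv
  have hderivle1 : ∀ s ∈ Ioi (0:ℝ), deriv m s ≤ 1 := by
    intro s hs
    have hgt : R₀ < max s R₀ + 1 := by
      have := le_max_right s R₀; linarith
    have hmem : (max s R₀ + 1 : ℝ) ∈ Ioi (0:ℝ) := by
      simp only [mem_Ioi]; linarith
    calc deriv m s ≤ deriv m (max s R₀ + 1) := by
          apply hmono' hs hmem
          have := le_max_left s R₀; linarith
      _ = 1 := hderiv1 _ hgt
  -- deriv m ≥ 0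
  have hderivnn : ∀ s ∈ Ioi (0:ℝ), 0 ≤ deriv m s := by
    intro s hs
    by_contra hneg
    push_neg at hneg
    have hanti : AntitoneOn m (Icc 0 s) := by
      apply antitoneOn_of_deriv_nonpos (convex_Icc 0 s)
        (cont.mono (Icc_subset_Ici_self))
      · rw [interior_Icc]
        exact fun x hx => (diff x hx.1).differentiableWithinAt
      · rw [interior_Icc]
        intro x hx
        exact le_of_lt (lt_of_le_of_lt (hmono' hx.1 hs hx.2.le) hneg)
    have h0s : (0:ℝ) ≤ s := le_of_lt hs
    have := hanti (left_mem_Icc.mpr h0s) (right_mem_Icc.mpr h0s) h0s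
    rw [zero] at this
    exact absurd (pos s hs) (not_lt.mpr this)
  -- m is monotone on [0,∞)
  have hmmono : MonotoneOn m (Ici 0) := by
    apply monotoneOn_of_deriv_nonneg (convex_Ici 0) cont
    · rw [interior_Ici]
      exact fun x hx => (diff x hx).differentiableWithinAt
    · rw [interior_Ici]
      exact hderivnn
  -- the Wronskian-type function w
  set w : ℝ → ℝ := fun s => s * deriv m s - m s with hw
  have hwderiv : ∀ s ∈ Ioi (0:ℝ), HasDerivAt w (s * (v s * m s / μ)) s := by
    intro s hs
    have h1 : HasDerivAt (deriv m) (deriv (deriv m) s) s := (diff2 s hs).hasDerivAt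
    have h2 : HasDerivAt (fun t => t * deriv m t)
        (1 * deriv m s + s * deriv (deriv m) s) s := (hasDerivAt_id s).mul h1
    have h3 : HasDerivAt m (deriv m s) s := (diff s hs).hasDerivAt
    have h4 := h2.sub h3
    have heq : 1 * deriv m s + s * deriv (deriv m) s - deriv m s
        = s * (v s * m s / μ) := by
      rw [hd2 s hs]; ring
    rw [heq] at h4
    exact h4
  have hwcont : ContinuousOn w (Ioi 0) :=
    (continuousOn_id.mul derivCont).sub (cont.mono Ioi_subset_Ici_self)
  -- w is monotone on (0,∞)
  have hwmono : MonotoneOn w (Ioi 0) := by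
    apply monotoneOn_of_deriv_nonneg (convex_Ioi 0) hwcont
    · rw [interior_Ioi]
      exact fun x hx => (hwderiv x hx).differentiableAt.differentiableWithinAt
    · rw [interior_Ioi]
      intro x hx
      rw [(hwderiv x hx).deriv]
      exact mul_nonneg (le_of_lt hx)
        (div_nonneg (mul_nonneg (hv_nonneg x) (pos x hx).le) hμ.le)
  -- w = a above R₀
  have hwval : ∀ s, R₀ < s → w s = a := by
    intro s hs
    simp only [hw]
    rw [hderiv1 s hs, radiation s hs.le]
    ring
  -- w ≥ 0 on (0,∞)
  have hwnonneg : ∀ s ∈ Ioi (0:ℝ), 0 ≤ w s := by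
    intro s hs
    have hg : AntitoneOn (fun t => m t - t * deriv m s) (Icc 0 s) := by
      refine antitoneOn_of_deriv_nonpos (convex_Icc 0 s) ?_ ?_ ?_
      · exact (cont.mono Icc_subset_Ici_self).sub
          ((continuous_id.mul continuous_const).continuousOn)
      · rw [interior_Icc]
        intro x hx
        exact ((diff x hx.1).sub
          (differentiableAt_id.mul_const (deriv m s))).differentiableWithinAt
      · rw [interior_Icc]
        intro x hx
        have hder : HasDerivAt (fun t => m t - t * deriv m s)
            (deriv m x - 1 * deriv m s) x :=
          (diff x hx.1).hasDerivAt.sub ((hasDerivAt_id x).mul_const (deriv m s))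
        rw [hder.deriv]
        have : deriv m x ≤ deriv m s := hmono' hx.1 hs hx.2.le
        linarith
    have h0s : (0:ℝ) ≤ s := le_of_lt hs
    have h5 : m s - s * deriv m s ≤ m 0 - 0 * deriv m s :=
      hg (left_mem_Icc.mpr h0s) (right_mem_Icc.mpr h0s) h0s
    rw [zero] at h5
    show (0:ℝ) ≤ s * deriv m s - m s
    linarith
  -- a ≥ 0
  have ha0 : 0 ≤ a := by
    have := hwnonneg (R₀ + 1) (by simp only [mem_Ioi]; linarith)
    rwa [hwval (R₀ + 1) (by linarith)] at this
  -- w ≤ a everywhere on (0,∞)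
  have hwlea : ∀ s ∈ Ioi (0:ℝ), w s ≤ a := by
    intro s hs
    have hgt : R₀ < max s R₀ + 1 := by
      have := le_max_right s R₀; linarith
    have hmem : (max s R₀ + 1 : ℝ) ∈ Ioi (0:ℝ) := by
      simp only [mem_Ioi]; linarith
    calc w s ≤ w (max s R₀ + 1) := by
          apply hwmono hs hmem
          have := le_max_left s R₀; linarith
      _ = a := hwval _ hgt
  -- quadratic bound on w for r ≤ R₀
  set K : ℝ := V * m R₀ / μ with hK
  have hK0 : 0 ≤ K := div_nonneg (mul_nonneg hV0 hmR₀.le) hμ.le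
  have hwq : ∀ s, 0 < s → s ≤ R₀ → w s ≤ K * s ^ 2 := by
    intro s hs hsR
    apply le_of_forall_pos_le_add
    intro ε hε
    set s₀ : ℝ := min ε s with hs₀def
    have hs₀pos : 0 < s₀ := lt_min hε hs
    have hs₀le : s₀ ≤ s := min_le_right ε s
    have hs₀ε : s₀ ≤ ε := min_le_left ε s
    have hmonoh : MonotoneOn (fun t => K * t ^ 2 - w t) (Icc s₀ s) := by
      apply monotoneOn_of_deriv_nonneg (convex_Icc s₀ s)
      · exact ((continuousOn_const.mul (continuousOn_pow 2))).sub
          (hwcont.mono (fun x hx => lt_of_lt_of_le hs₀pos hx.1))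
      · rw [interior_Icc]
        intro x hx
        have hx0 : 0 < x := lt_of_le_of_lt hs₀pos.le hx.1
        have hK2 : HasDerivAt (fun t : ℝ => K * t ^ 2) (K * (2 * x)) x := by
          simpa using ((hasDerivAt_pow 2 x).const_mul K)
        exact (hK2.sub (hwderiv x hx0)).differentiableAt.differentiableWithinAt
      · rw [interior_Icc]
        intro x hx
        have hx0 : 0 < x := lt_of_le_of_lt hs₀pos.le hx.1
        have hK2 : HasDerivAt (fun t : ℝ => K * t ^ 2) (K * (2 * x)) x := by
          simpa using ((hasDerivAt_pow 2 x).const_mul K)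
        rw [HasDerivAt.deriv (f := fun t => K * t ^ 2 - w t) (hK2.sub (hwderiv x hx0))]
        have hmle : m x ≤ m R₀ := hmmono (le_of_lt hx0) hR₀.le (by linarith [hx.2])
        have hvm : v x * m x ≤ V * m R₀ :=
          mul_le_mul (hvle x) hmle (pos x hx0).le hV0
        have h1 : v x * m x / μ ≤ K := by
          rw [hK]
          exact (div_le_div_iff_of_pos_right hμ).mpr hvm
        nlinarith [mul_le_mul_of_nonneg_left h1 hx0.le, mul_nonneg hK0 hx0.le]
    have h1 : K * s₀ ^ 2 - w s₀ ≤ K * s ^ 2 - w s :=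
      hmonoh (left_mem_Icc.mpr hs₀le) (right_mem_Icc.mpr hs₀le) hs₀le
    have hws₀ : w s₀ ≤ s₀ := by
      show s₀ * deriv m s₀ - m s₀ ≤ s₀
      have h2 := hderivle1 s₀ hs₀pos
      have h3 := (pos s₀ hs₀pos).le
      nlinarith [mul_le_mul_of_nonneg_left h2 hs₀pos.le]
    nlinarith [mul_nonneg hK0 (sq_nonneg s₀)]
  -- derivative of the scattering function
  have hfderiv : deriv (fun s => m s / s) r = w r / r ^ 2 := by
    have hd : HasDerivAt (fun s => m s / s) ((deriv m r * r - m r * 1) / r ^ 2) r :=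
      (diff r hr).hasDerivAt.div (hasDerivAt_id r) (ne_of_gt hr)
    rw [hd.deriv]
    show (deriv m r * r - m r * 1) / r ^ 2 = (r * deriv m r - m r) / r ^ 2
    ring
  have hr2 : (0:ℝ) < r ^ 2 := by positivity
  have hsum : (0:ℝ) < r ^ 2 + R₀ ^ 2 := by positivity
  constructor
  · rw [hfderiv]
    exact div_nonneg (hwnonneg r hr) hr2.le
  · rw [hfderiv]
    have hRa : R₀ - a = m R₀ := by rw [ha]; ring
    rw [hRa]
    have hgoal : w r * (r ^ 2 + R₀ ^ 2) ≤ 2 * (a + R₀ ^ 2 * V * m R₀ / μ) * r ^ 2 := by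
      have hKey : R₀ ^ 2 * V * m R₀ / μ = R₀ ^ 2 * K := by rw [hK]; ring
      rw [hKey]
      rcases le_total r R₀ with hle | hle
      · have h1 : w r ≤ K * r ^ 2 := hwq r hr hle
        have h2 : r ^ 2 ≤ R₀ ^ 2 := by nlinarith
        have h3 : 0 ≤ w r := hwnonneg r hr
        nlinarith [hK0, hr2.le, sq_nonneg R₀]
      · have h1 : w r ≤ a := hwlea r hr
        have h2 : R₀ ^ 2 ≤ r ^ 2 := by nlinarith
        have h3 : 0 ≤ w r := hwnonneg r hr
        nlinarith [mul_le_mul_of_nonneg_left h2 h3, mul_le_mul_of_nonneg_right h1 hr2.le,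
          mul_nonneg (mul_nonneg hK0 (sq_nonneg R₀)) hr2.le]
    calc w r / r ^ 2 ≤ 2 * (a + R₀ ^ 2 * V * m R₀ / μ) / (r ^ 2 + R₀ ^ 2) := by
          rw [div_le_div_iff₀ hr2 hsum]
          linarith [hgoal]
      _ = 2 / (r ^ 2 + R₀ ^ 2) * (a + R₀ ^ 2 * V * m R₀ / μ) := by ring
end

section
/- The scattering function satisfies the identity and two-sided bound 0 ≤ 𝔞₀^μ − ∫₀^∞ f'(r)² r² dr = (1/μ)∫₀^{R₀} v(r) f(r)² r² dr ≤ (𝔞₀^μ/R₀)(𝔠₀ − 𝔞₀^μ). Equivalently, for the radial function f(x) := f(|x|) on ℝ³: 0 ≤ 𝔞₀^μ − (1/4π)∫_{ℝ³} |∇f(x)|² dx = (1/(4πμ))∫_{ℝ³} v(|x|) f(x)² dx ≤ (𝔞₀^μ/R₀)(𝔠₀ − 𝔞₀^μ). -/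
open Set MeasureTheory

theorem radial_core
    (R₀ μ : ℝ) (hR₀ : 0 < R₀) (hμ : 0 < μ)
    (v : ℝ → ℝ) (hv_meas : Measurable v) (hv_nonneg : ∀ r, 0 ≤ v r)
    (hv_bdd : BddAbove (Set.range v))
    (hv_supp : ∀ r, R₀ ≤ r → v r = 0)
    (m : ℝ → ℝ) (hm : ZeroEnergyScattering v R₀ μ m) :
    ((R₀ - m R₀) - ∫ r in Set.Ioi (0 : ℝ), (deriv (fun s => m s / s) r) ^ 2 * r ^ 2
      = (1 / μ) * ∫ r in Set.Ioc (0 : ℝ) R₀, v r * (m r / r) ^ 2 * r ^ 2) ∧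
    ((1 / μ) * (∫ r in Set.Ioc (0 : ℝ) R₀, v r * (m r / r) ^ 2 * r ^ 2)
      ≤ (R₀ - m R₀) / R₀ * (R₀ - (R₀ - m R₀))) ∧
    (0 ≤ ∫ r in Set.Ioc (0 : ℝ) R₀, v r * (m r / r) ^ 2 * r ^ 2) ∧
    ((∫ y in Set.Ioi (0 : ℝ), y ^ 2 * (v y * (m y / y) ^ 2))
      = ∫ r in Set.Ioc (0 : ℝ) R₀, v r * (m r / r) ^ 2 * r ^ 2) := by
  obtain ⟨hcont, hdiff, hdcont, hdiff2, hode, hzero, hpos, hrad⟩ := hm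
  have hμ' : μ ≠ 0 := hμ.ne'
  have hR₀' : R₀ ≠ 0 := hR₀.ne'
  set a : ℝ := R₀ - m R₀ with ha
  -- first order derivative facts
  have hm' : ∀ r ∈ Ioi (0:ℝ), HasDerivAt m (deriv m r) r := fun r hr =>
    (hdiff r hr).hasDerivAt
  have hm'' : ∀ r ∈ Ioi (0:ℝ), HasDerivAt (deriv m) (v r * m r / μ) r := by
    intro r hr
    have h := (hdiff2 r hr).hasDerivAt
    have : deriv (deriv m) r = v r * m r / μ := by
      rw [eq_div_iff hμ']
      linarith [hode r hr]
    rwa [this] at h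
  -- deriv m R₀ = 1
  have hderivR : deriv m R₀ = 1 := by
    have h1 : HasDerivWithinAt m 1 (Ici R₀) R₀ := by
      have h := ((hasDerivAt_id R₀).sub_const a).hasDerivWithinAt (s := Ici R₀)
      exact h.congr (fun y hy => hrad y hy) (hrad R₀ le_rfl)
    have h2 : HasDerivWithinAt m (deriv m R₀) (Ici R₀) R₀ :=
      (hm' R₀ hR₀).hasDerivWithinAt
    have u := uniqueDiffOn_Ici R₀ R₀ self_mem_Ici
    rw [← h2.derivWithin u, h1.derivWithin u]
  -- bounds
  obtain ⟨Mb, hMb⟩ := (isCompact_Icc (a := (0:ℝ)) (b := R₀)).exists_bound_of_continuousOn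
    (hcont.mono Icc_subset_Ici_self)
  obtain ⟨Vb, hVb⟩ := hv_bdd
  have hVb' : ∀ r, |v r| ≤ Vb := fun r => by
    rw [abs_of_nonneg (hv_nonneg r)]; exact hVb (mem_range_self r)
  have hVb0 : 0 ≤ Vb := le_trans (hv_nonneg 0) (hVb (mem_range_self 0))
  have hMb0 : 0 ≤ Mb := le_trans (abs_nonneg _) (hMb 0 ⟨le_rfl, hR₀.le⟩)
  set C : ℝ := 1 + (Vb * Mb / μ) * R₀ with hC
  have hC0 : 0 < C := by positivity
  have hd_bound : ∀ r ∈ Ioc (0:ℝ) R₀, |deriv m r| ≤ C := by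
    intro r hr
    have key := Convex.norm_image_sub_le_of_norm_hasDerivWithin_le
      (f := deriv m) (f' := fun x => v x * m x / μ) (s := Icc r R₀) (C := Vb * Mb / μ)
      (fun x hx => (hm'' x (lt_of_lt_of_le hr.1 hx.1)).hasDerivWithinAt)
      (fun x hx => by
        have hxm : |m x| ≤ Mb := hMb x ⟨(hr.1.le.trans hx.1), hx.2⟩
        have : ‖v x * m x / μ‖ = |v x| * |m x| / μ := by
          rw [Real.norm_eq_abs, abs_div, abs_mul, abs_of_pos hμ]
        rw [this]
        gcongr
        all_goals first | exact hVb' x | exact hxm)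
      (convex_Icc _ _) (right_mem_Icc.2 hr.2) (left_mem_Icc.2 hr.2)
    -- key : ‖deriv m r - deriv m R₀‖ ≤ Vb*Mb/μ * ‖r - R₀‖
    have h1 : |deriv m r| - |deriv m R₀| ≤ |deriv m r - deriv m R₀| :=
      abs_sub_abs_le_abs_sub _ _
    rw [Real.norm_eq_abs, Real.norm_eq_abs] at key
    have h2 : |r - R₀| ≤ R₀ := by
      rw [abs_of_nonpos (by linarith [hr.2])]; linarith [hr.1]
    have h3 : Vb * Mb / μ * |r - R₀| ≤ Vb * Mb / μ * R₀ :=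
      mul_le_mul_of_nonneg_left h2 (by positivity)
    rw [hderivR] at h1 key
    simp only [abs_one] at h1
    rw [hC]
    linarith
  have hm_bound : ∀ r ∈ Ioc (0:ℝ) R₀, |m r| ≤ C * r := by
    intro r hr
    have hle : ∀ ε ∈ Ioo (0:ℝ) r, |m r| ≤ |m ε| + C * r := by
      intro ε hε
      have key := Convex.norm_image_sub_le_of_norm_hasDerivWithin_le
        (f := m) (f' := deriv m) (s := Icc ε r) (C := C)
        (fun x hx => (hm' x (lt_of_lt_of_le hε.1 hx.1)).hasDerivWithinAt)
        (fun x hx => by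
          rw [Real.norm_eq_abs]
          exact hd_bound x ⟨lt_of_lt_of_le hε.1 hx.1, hx.2.trans hr.2⟩)
        (convex_Icc _ _) (left_mem_Icc.2 hε.2.le) (right_mem_Icc.2 hε.2.le)
      rw [Real.norm_eq_abs, Real.norm_eq_abs] at key
      have h1 : |m r| - |m ε| ≤ |m r - m ε| := abs_sub_abs_le_abs_sub _ _
      have h2 : |r - ε| ≤ r := by
        rw [abs_of_nonneg (by linarith [hε.2])]; linarith [hε.1]
      have h3 : C * |r - ε| ≤ C * r := mul_le_mul_of_nonneg_left h2 hC0.le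
      linarith
    have htend : Filter.Tendsto (fun ε => |m ε| + C * r) (nhdsWithin 0 (Ioi (0:ℝ)))
        (nhds (|m 0| + C * r)) := by
      have hc0 : ContinuousWithinAt m (Ioi (0:ℝ)) 0 :=
        (hcont 0 self_mem_Ici).mono Ioi_subset_Ici_self
      exact (hc0.abs.add continuousWithinAt_const).tendsto
    rw [hzero, abs_zero, zero_add] at htend
    refine ge_of_tendsto htend ?_
    exact Filter.eventually_of_mem (Ioo_mem_nhdsGT_of_mem ⟨le_rfl, hr.1⟩) hle
  -- derivative of g = m/r
  have hg' : ∀ r ∈ Ioi (0:ℝ), HasDerivAt (fun s => m s / s)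
      ((deriv m r * r - m r * 1) / r ^ 2) r := fun r hr =>
    (hm' r hr).div (hasDerivAt_id r) (ne_of_gt hr)
  have hgderiv : ∀ r ∈ Ioi (0:ℝ),
      deriv (fun s => m s / s) r = (deriv m r * r - m r * 1) / r ^ 2 := fun r hr =>
    (hg' r hr).deriv
  -- bound on P1
  have hP1bound : ∀ r ∈ Ioc (0:ℝ) R₀,
      |(deriv (fun s => m s / s) r) ^ 2 * r ^ 2| ≤ (2*C)^2 := by
    intro r hr
    have hr0 : (0:ℝ) < r := hr.1
    rw [hgderiv r hr0]
    have heq : ((deriv m r * r - m r * 1) / r ^ 2) ^ 2 * r ^ 2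
        = (deriv m r - m r / r) ^ 2 := by
      field_simp
    rw [heq, abs_of_nonneg (sq_nonneg _), ← sq_abs]
    have hb : |deriv m r - m r / r| ≤ 2 * C := by
      have h1 : |m r / r| ≤ C := by
        rw [abs_div, abs_of_pos hr0, div_le_iff₀ hr0]
        exact hm_bound r hr
      calc |deriv m r - m r / r| ≤ |deriv m r| + |m r / r| := abs_sub _ _
        _ ≤ C + C := add_le_add (hd_bound r hr) h1
        _ = 2 * C := by ring
    exact pow_le_pow_left₀ (abs_nonneg _) hb 2
  -- φ and its derivative
  set φ : ℝ → ℝ := fun r => m r * deriv m r - m r ^ 2 / r with hφ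
  have hφderiv : ∀ x ∈ Ioi (0:ℝ), HasDerivAt φ
      ((deriv (fun s => m s / s) x) ^ 2 * x ^ 2 + (1/μ) * (v x * m x ^ 2)) x := by
    intro x hx
    have hx0 : (0:ℝ) < x := hx
    have h1 := hm' x hx
    have h2 := hm'' x hx
    have hsq : HasDerivAt (fun r => m r ^ 2) (2 * m x * deriv m x) x := by
      have : HasDerivAt (fun r => m r ^ 2) _ x := h1.pow 2
      simpa [mul_comm, mul_assoc, mul_left_comm] using this
    have hq : HasDerivAt (fun r => m r ^ 2 / r)
        ((2 * m x * deriv m x * x - m x ^ 2 * 1) / x ^ 2) x :=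
      hsq.div (hasDerivAt_id x) hx0.ne'
    have hmain := (h1.mul h2).sub hq
    have hval : deriv m x * deriv m x + m x * (v x * m x / μ)
        - (2 * m x * deriv m x * x - m x ^ 2 * 1) / x ^ 2
        = (deriv (fun s => m s / s) x) ^ 2 * x ^ 2 + (1/μ) * (v x * m x ^ 2) := by
      rw [hgderiv x hx]
      field_simp
      ring
    rw [hval] at hmain
    exact hmain
  -- continuity of φ on [0, R₀]
  have hφ0 : φ 0 = 0 := by simp [hφ, hzero]
  have hφcont : ContinuousOn φ (Icc 0 R₀) := by
    intro x hx
    rcases eq_or_lt_of_le hx.1 with h0 | h0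
    · -- x = 0
      rw [← h0]
      have hbound : ∀ r ∈ Icc (0:ℝ) R₀, ‖φ r‖ ≤ 2 * C ^ 2 * r := by
        intro r hr
        rcases eq_or_lt_of_le hr.1 with hr0 | hr0
        · rw [← hr0]; simp [hφ0]
        · have hmr := hm_bound r ⟨hr0, hr.2⟩
          have hdr := hd_bound r ⟨hr0, hr.2⟩
          have h1 : |m r * deriv m r| ≤ C * r * C := by
            rw [abs_mul]
            exact mul_le_mul hmr hdr (abs_nonneg _) (by positivity)
          have h2 : |m r ^ 2 / r| ≤ C ^ 2 * r := by
            rw [abs_div, abs_of_pos hr0, div_le_iff₀ hr0, abs_pow]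
            calc |m r| ^ 2 ≤ (C * r) ^ 2 :=
                  pow_le_pow_left₀ (abs_nonneg _) hmr 2
              _ = C ^ 2 * r * r := by ring
          rw [Real.norm_eq_abs]
          calc |φ r| ≤ |m r * deriv m r| + |m r ^ 2 / r| := abs_sub _ _
            _ ≤ C * r * C + C ^ 2 * r := add_le_add h1 h2
            _ = 2 * C ^ 2 * r := by ring
      have htl : Filter.Tendsto (fun r : ℝ => 2 * C ^ 2 * r)
          (nhdsWithin 0 (Icc (0:ℝ) R₀)) (nhds 0) := by
        have hco : Continuous (fun r : ℝ => 2 * C ^ 2 * r) :=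
          continuous_const.mul continuous_id
        have := hco.tendsto 0
        rw [mul_zero] at this
        exact this.mono_left nhdsWithin_le_nhds
      have : Filter.Tendsto φ (nhdsWithin 0 (Icc (0:ℝ) R₀)) (nhds 0) :=
        squeeze_zero_norm' (Filter.eventually_of_mem self_mem_nhdsWithin hbound) htl
      rw [ContinuousWithinAt, hφ0]
      exact this
    · -- x > 0
      have hdm : ContinuousAt (deriv m) x := hdcont.continuousAt (Ioi_mem_nhds h0)
      have hmx : ContinuousAt m x := hcont.continuousAt (Ici_mem_nhds h0)
      exact ((hmx.mul hdm).sub ((hmx.pow 2).div continuousAt_id h0.ne')).continuousWithinAt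
  -- integrability on (0, R₀]
  have hP1meas : Measurable (fun r : ℝ => (deriv (fun s => m s / s) r) ^ 2 * r ^ 2) :=
    ((measurable_deriv _).pow_const 2).mul (measurable_id.pow_const 2)
  have hP1int : IntegrableOn (fun r : ℝ => (deriv (fun s => m s / s) r) ^ 2 * r ^ 2)
      (Ioc 0 R₀) := by
    refine ⟨hP1meas.aestronglyMeasurable.restrict,
      HasFiniteIntegral.restrict_of_bounded (C := (2*C)^2) measure_Ioc_lt_top ?_⟩
    exact (ae_restrict_iff' measurableSet_Ioc).2 (Filter.Eventually.of_forall hP1bound)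
  have hmash : AEStronglyMeasurable (fun r : ℝ => m r ^ 2) (volume.restrict (Ioc 0 R₀)) := by
    have : ContinuousOn (fun r : ℝ => m r ^ 2) (Ioc 0 R₀) :=
      ((hcont.mono (fun x hx => le_of_lt hx.1)).pow 2)
    exact this.aestronglyMeasurable measurableSet_Ioc
  have hP2int : IntegrableOn (fun r : ℝ => v r * m r ^ 2) (Ioc 0 R₀) := by
    refine ⟨(hv_meas.aestronglyMeasurable.restrict).mul hmash,
      HasFiniteIntegral.restrict_of_bounded (C := Vb * Mb ^ 2) measure_Ioc_lt_top ?_⟩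
    refine (ae_restrict_iff' measurableSet_Ioc).2 (Filter.Eventually.of_forall ?_)
    intro r hr
    have h1 : |m r| ≤ Mb := hMb r ⟨hr.1.le, hr.2⟩
    rw [Real.norm_eq_abs, abs_mul, abs_pow]
    exact mul_le_mul (hVb' r) (pow_le_pow_left₀ (abs_nonneg _) h1 2) (by positivity) hVb0
  have hsumint : IntegrableOn (fun r : ℝ => (deriv (fun s => m s / s) r) ^ 2 * r ^ 2
      + (1/μ) * (v r * m r ^ 2)) (Ioc 0 R₀) := hP1int.add (hP2int.const_mul _)
  -- FTC
  have hFTC : ∫ r in Ioc (0:ℝ) R₀, ((deriv (fun s => m s / s) r) ^ 2 * r ^ 2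
      + (1/μ) * (v r * m r ^ 2)) = m R₀ - m R₀ ^ 2 / R₀ := by
    have := intervalIntegral.integral_eq_sub_of_hasDeriv_right_of_le hR₀.le hφcont
      (fun x hx => (hφderiv x hx.1).hasDerivWithinAt)
      ((intervalIntegrable_iff_integrableOn_Ioc_of_le hR₀.le).2 hsumint)
    rw [intervalIntegral.integral_of_le hR₀.le] at this
    rw [this, hφ0]
    simp only [hφ, hderivR]
    ring
  -- split off the two pieces
  have hsplit : (∫ r in Ioc (0:ℝ) R₀, (deriv (fun s => m s / s) r) ^ 2 * r ^ 2)
      + (1/μ) * (∫ r in Ioc (0:ℝ) R₀, v r * m r ^ 2) = m R₀ - m R₀ ^ 2 / R₀ := by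
    rw [← integral_const_mul, ← integral_add hP1int (hP2int.const_mul _)]
    exact hFTC
  -- tail behaviour
  have htailderiv : ∀ x ∈ Ioi R₀, deriv (fun s => m s / s) x = a / x ^ 2 := by
    intro x hx
    have hx0 : (0:ℝ) < x := hR₀.trans hx
    have hev : (fun s => m s / s) =ᶠ[nhds x] (fun s => (s - a) / s) := by
      filter_upwards [Ioi_mem_nhds hx] with s hs
      rw [hrad s (le_of_lt hs)]
    rw [hev.deriv_eq]
    have hd : HasDerivAt (fun s : ℝ => (s - a) / s)
        ((1 * x - (x - a) * 1) / x ^ 2) x :=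
      ((hasDerivAt_id x).sub_const a).div (hasDerivAt_id x) hx0.ne'
    rw [hd.deriv]
    congr 1
    ring
  have hrpow : ∀ x : ℝ, 0 < x → x ^ (-2 : ℝ) = (x ^ 2)⁻¹ := by
    intro x hx
    rw [show (-2:ℝ) = ((-2 : ℤ) : ℝ) by norm_num, Real.rpow_intCast, zpow_neg, zpow_two, sq]
  have htaileq : EqOn (fun r : ℝ => (deriv (fun s => m s / s) r) ^ 2 * r ^ 2)
      (fun x : ℝ => a ^ 2 * x ^ (-2 : ℝ)) (Ioi R₀) := by
    intro x hx
    have hx0 : (0:ℝ) < x := hR₀.trans hx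
    simp only
    rw [htailderiv x hx, hrpow x hx0]
    field_simp
  have htailint : IntegrableOn (fun r : ℝ => (deriv (fun s => m s / s) r) ^ 2 * r ^ 2)
      (Ioi R₀) := by
    have h := (integrableOn_Ioi_rpow_of_lt (by norm_num : (-2:ℝ) < -1) hR₀).const_mul (a ^ 2)
    exact IntegrableOn.congr_fun h htaileq.symm measurableSet_Ioi
  have htailval : ∫ r in Ioi R₀, (deriv (fun s => m s / s) r) ^ 2 * r ^ 2 = a ^ 2 / R₀ := by
    rw [setIntegral_congr_fun measurableSet_Ioi htaileq, integral_const_mul,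
      integral_Ioi_rpow_of_lt (by norm_num : (-2:ℝ) < -1) hR₀]
    rw [show (-2:ℝ) + 1 = -1 by norm_num, Real.rpow_neg_one]
    field_simp
  -- total integral
  have hTotal : ∫ r in Ioi (0:ℝ), (deriv (fun s => m s / s) r) ^ 2 * r ^ 2
      = (∫ r in Ioc (0:ℝ) R₀, (deriv (fun s => m s / s) r) ^ 2 * r ^ 2) + a ^ 2 / R₀ := by
    rw [← Ioc_union_Ioi_eq_Ioi hR₀.le,
      setIntegral_union (Ioc_disjoint_Ioi le_rfl) measurableSet_Ioi hP1int htailint,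
      htailval]
  -- relating the two forms of the potential integral
  have hIV : ∫ r in Ioc (0:ℝ) R₀, v r * (m r / r) ^ 2 * r ^ 2
      = ∫ r in Ioc (0:ℝ) R₀, v r * m r ^ 2 := by
    refine setIntegral_congr_fun measurableSet_Ioc (fun r hr => ?_)
    have : r ≠ 0 := hr.1.ne'
    field_simp
  have hI1nonneg : 0 ≤ ∫ r in Ioc (0:ℝ) R₀, (deriv (fun s => m s / s) r) ^ 2 * r ^ 2 :=
    setIntegral_nonneg measurableSet_Ioc (fun x _ => by positivity)
  have hIVnonneg : 0 ≤ ∫ r in Ioc (0:ℝ) R₀, v r * (m r / r) ^ 2 * r ^ 2 :=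
    setIntegral_nonneg measurableSet_Ioc
      (fun x _ => mul_nonneg (mul_nonneg (hv_nonneg x) (sq_nonneg _)) (sq_nonneg _))
  -- main identity
  have hmainid : a - ∫ r in Ioi (0:ℝ), (deriv (fun s => m s / s) r) ^ 2 * r ^ 2
      = (1/μ) * ∫ r in Ioc (0:ℝ) R₀, v r * (m r / r) ^ 2 * r ^ 2 := by
    rw [hTotal, hIV]
    have h1 : (∫ r in Ioc (0:ℝ) R₀, (deriv (fun s => m s / s) r) ^ 2 * r ^ 2)
        = m R₀ - m R₀ ^ 2 / R₀ - (1/μ) * (∫ r in Ioc (0:ℝ) R₀, v r * m r ^ 2) := by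
      linarith [hsplit]
    rw [h1, ha]
    field_simp
    ring
  -- upper bound
  have hub : (1/μ) * (∫ r in Ioc (0:ℝ) R₀, v r * (m r / r) ^ 2 * r ^ 2)
      ≤ a / R₀ * (R₀ - a) := by
    have hq : a - a ^ 2 / R₀ = a / R₀ * (R₀ - a) := by field_simp
    have h2 := hmainid
    rw [hTotal] at h2
    linarith
  -- the polar-coordinates form of the potential integral
  have hpolarIV : (∫ y in Ioi (0:ℝ), y ^ 2 * (v y * (m y / y) ^ 2))
      = ∫ r in Ioc (0:ℝ) R₀, v r * (m r / r) ^ 2 * r ^ 2 := by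
    have hmid : IntegrableOn (fun y : ℝ => y ^ 2 * (v y * (m y / y) ^ 2)) (Ioc 0 R₀) := by
      refine hP2int.congr_fun (fun y hy => ?_) measurableSet_Ioc
      have : y ≠ 0 := hy.1.ne'
      field_simp
    have hzero' : EqOn (fun y : ℝ => y ^ 2 * (v y * (m y / y) ^ 2))
        (fun _ : ℝ => (0:ℝ)) (Ioi R₀) := by
      intro y hy
      simp only
      rw [hv_supp y (le_of_lt hy)]
      ring
    have htail0 : IntegrableOn (fun y : ℝ => y ^ 2 * (v y * (m y / y) ^ 2)) (Ioi R₀) :=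
      IntegrableOn.congr_fun integrableOn_zero hzero'.symm measurableSet_Ioi
    rw [← Ioc_union_Ioi_eq_Ioi hR₀.le,
      setIntegral_union (Ioc_disjoint_Ioi le_rfl) measurableSet_Ioi hmid htail0,
      setIntegral_congr_fun measurableSet_Ioi hzero', integral_zero, add_zero]
    refine setIntegral_congr_fun measurableSet_Ioc (fun y hy => ?_)
    ring
  exact ⟨hmainid, hub, hIVnonneg, hpolarIV⟩

lemma gamma_five_half : Real.Gamma ((3:ℝ)/2 + 1) = 3/4 * Real.sqrt Real.pi := by
  rw [Real.Gamma_add_one (by norm_num), show (3:ℝ)/2 = 1/2 + 1 by norm_num,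
    Real.Gamma_add_one (by norm_num), Real.Gamma_one_half_eq]
  ring

lemma kappa3 : (volume (Metric.ball (0 : EuclideanSpace ℝ (Fin 3)) 1)).toReal
    = 4 * Real.pi / 3 := by
  have hs : Real.sqrt Real.pi ≠ 0 := (Real.sqrt_pos.2 Real.pi_pos).ne'
  rw [EuclideanSpace.volume_ball, Fintype.card_fin, ENNReal.ofReal_one, one_pow, one_mul]
  rw [show ((3:ℕ):ℝ) = (3:ℝ) by norm_num]
  rw [gamma_five_half, ENNReal.toReal_ofReal (by positivity)]
  rw [show Real.sqrt Real.pi ^ 3 = Real.sqrt Real.pi ^ 2 * Real.sqrt Real.pi from pow_succ _ 2,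
    Real.sq_sqrt Real.pi_pos.le]
  field_simp

lemma polar3 (f : ℝ → ℝ) :
    ∫ x : EuclideanSpace ℝ (Fin 3), f ‖x‖
      = 4 * Real.pi * ∫ y in Ioi (0:ℝ), y ^ 2 * f y := by
  rw [integral_fun_norm_addHaar (volume : Measure (EuclideanSpace ℝ (Fin 3))) f]
  simp only [finrank_euclideanSpace_fin, smul_eq_mul, nsmul_eq_mul,
    show (3:ℕ) - 1 = 2 from rfl]
  rw [measureReal_def, kappa3]
  ring

lemma norm_fderiv_radial (g : ℝ → ℝ) (x : EuclideanSpace ℝ (Fin 3)) (hx : x ≠ 0)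
    (hg : HasDerivAt g (deriv g ‖x‖) ‖x‖) :
    ‖fderiv ℝ (fun y : EuclideanSpace ℝ (Fin 3) => g ‖y‖) x‖ = |deriv g ‖x‖| := by
  have hnd : DifferentiableAt ℝ (fun y : EuclideanSpace ℝ (Fin 3) => ‖y‖) x :=
    (contDiffAt_norm ℝ (n := 1) hx).differentiableAt one_ne_zero
  have hcomp : HasFDerivAt (fun y : EuclideanSpace ℝ (Fin 3) => g ‖y‖)
      (deriv g ‖x‖ • fderiv ℝ (fun y : EuclideanSpace ℝ (Fin 3) => ‖y‖) x) x :=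
    hg.comp_hasFDerivAt x hnd.hasFDerivAt
  rw [hcomp.fderiv, norm_smul, norm_fderiv_norm hnd, mul_one, Real.norm_eq_abs]

/-- **Energy identity for the scattering function.**  With `f(r) = m(r)/r` and
`𝔞₀^μ = R₀ - m(R₀)`, one has
`0 ≤ 𝔞₀^μ - ∫₀^∞ f'(r)² r² dr = (1/μ)∫₀^{R₀} v f² r² dr ≤ (𝔞₀^μ/R₀)(𝔠₀ - 𝔞₀^μ)`,
together with the equivalent three-dimensional formulation for the radial function
`x ↦ f(|x|)` on `ℝ³`. -/
theorem scattering_function_energy_identity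
    (R₀ μ : ℝ) (hR₀ : 0 < R₀) (hμ : 0 < μ)
    (v : ℝ → ℝ) (hv_meas : Measurable v) (hv_nonneg : ∀ r, 0 ≤ v r)
    (hv_bdd : BddAbove (Set.range v))
    (hv_supp : ∀ r, R₀ ≤ r → v r = 0)
    (m : ℝ → ℝ) (hm : ZeroEnergyScattering v R₀ μ m) :
    (0 ≤ (R₀ - m R₀) - ∫ r in Set.Ioi (0 : ℝ), (deriv (fun s => m s / s) r) ^ 2 * r ^ 2) ∧
    ((R₀ - m R₀) - (∫ r in Set.Ioi (0 : ℝ), (deriv (fun s => m s / s) r) ^ 2 * r ^ 2)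
      = (1 / μ) * ∫ r in Set.Ioc (0 : ℝ) R₀, v r * (m r / r) ^ 2 * r ^ 2) ∧
    ((1 / μ) * (∫ r in Set.Ioc (0 : ℝ) R₀, v r * (m r / r) ^ 2 * r ^ 2)
      ≤ (R₀ - m R₀) / R₀ * (R₀ - (R₀ - m R₀))) ∧
    (0 ≤ (R₀ - m R₀) - (1 / (4 * Real.pi)) *
        ∫ x : EuclideanSpace ℝ (Fin 3),
          ‖fderiv ℝ (fun y : EuclideanSpace ℝ (Fin 3) => m ‖y‖ / ‖y‖) x‖ ^ 2) ∧
    ((R₀ - m R₀) - (1 / (4 * Real.pi)) *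
        (∫ x : EuclideanSpace ℝ (Fin 3),
          ‖fderiv ℝ (fun y : EuclideanSpace ℝ (Fin 3) => m ‖y‖ / ‖y‖) x‖ ^ 2)
      = (1 / (4 * Real.pi * μ)) *
        ∫ x : EuclideanSpace ℝ (Fin 3), v ‖x‖ * (m ‖x‖ / ‖x‖) ^ 2) ∧
    ((1 / (4 * Real.pi * μ)) *
        (∫ x : EuclideanSpace ℝ (Fin 3), v ‖x‖ * (m ‖x‖ / ‖x‖) ^ 2)
      ≤ (R₀ - m R₀) / R₀ * (R₀ - (R₀ - m R₀))) := by
  obtain ⟨hid, hub, hIVnn, hIVpolar⟩ :=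
    radial_core R₀ μ hR₀ hμ v hv_meas hv_nonneg hv_bdd hv_supp m hm
  have hπ0 : (0:ℝ) < Real.pi := Real.pi_pos
  have e1 : ∀ t : ℝ, 1/(4*Real.pi) * (4*Real.pi*t) = t := fun t => by
    field_simp
  have hπ' : Real.pi ≠ 0 := hπ0.ne'
  have hμ' : μ ≠ 0 := hμ.ne'
  have e2 : ∀ t : ℝ, 1/(4*Real.pi*μ) * (4*Real.pi*t) = 1/μ * t := fun t => by
    field_simp
  -- the 3D gradient integral
  have hae : ∀ᵐ x : EuclideanSpace ℝ (Fin 3),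
      ‖fderiv ℝ (fun y : EuclideanSpace ℝ (Fin 3) => m ‖y‖ / ‖y‖) x‖ ^ 2
        = (fun r => (deriv (fun s => m s / s) r) ^ 2) ‖x‖ := by
    have h0 : ∀ᵐ x : EuclideanSpace ℝ (Fin 3), x ≠ 0 := by
      rw [ae_iff]
      simp only [ne_eq, not_not, Set.setOf_eq_eq_singleton]
      exact measure_singleton 0
    filter_upwards [h0] with x hx
    have hx0 : (0:ℝ) < ‖x‖ := norm_pos_iff.2 hx
    have hgd : HasDerivAt (fun s => m s / s) (deriv (fun s => m s / s) ‖x‖) ‖x‖ :=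
      ((hm.diff ‖x‖ hx0).div differentiableAt_id hx0.ne').hasDerivAt
    rw [norm_fderiv_radial (fun s => m s / s) x hx hgd, sq_abs]
  have hJ : (∫ x : EuclideanSpace ℝ (Fin 3),
        ‖fderiv ℝ (fun y : EuclideanSpace ℝ (Fin 3) => m ‖y‖ / ‖y‖) x‖ ^ 2)
      = 4 * Real.pi * ∫ r in Set.Ioi (0:ℝ), (deriv (fun s => m s / s) r) ^ 2 * r ^ 2 := by
    calc (∫ x : EuclideanSpace ℝ (Fin 3),
        ‖fderiv ℝ (fun y : EuclideanSpace ℝ (Fin 3) => m ‖y‖ / ‖y‖) x‖ ^ 2)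
        = ∫ x : EuclideanSpace ℝ (Fin 3),
            (fun r => (deriv (fun s => m s / s) r) ^ 2) ‖x‖ := integral_congr_ae hae
      _ = 4 * Real.pi * ∫ y in Set.Ioi (0:ℝ),
            y ^ 2 * (deriv (fun s => m s / s) y) ^ 2 := polar3 (fun r => (deriv (fun s => m s / s) r) ^ 2)
      _ = 4 * Real.pi * ∫ r in Set.Ioi (0:ℝ),
            (deriv (fun s => m s / s) r) ^ 2 * r ^ 2 := by
          congr 1
          exact setIntegral_congr_fun measurableSet_Ioi (fun y _ => by ring)
  have hJV : (∫ x : EuclideanSpace ℝ (Fin 3), v ‖x‖ * (m ‖x‖ / ‖x‖) ^ 2)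
      = 4 * Real.pi * ∫ r in Set.Ioc (0:ℝ) R₀, v r * (m r / r) ^ 2 * r ^ 2 := by
    calc (∫ x : EuclideanSpace ℝ (Fin 3), v ‖x‖ * (m ‖x‖ / ‖x‖) ^ 2)
        = 4 * Real.pi * ∫ y in Set.Ioi (0:ℝ), y ^ 2 * (v y * (m y / y) ^ 2) := polar3 (fun r => v r * (m r / r) ^ 2)
      _ = 4 * Real.pi * ∫ r in Set.Ioc (0:ℝ) R₀, v r * (m r / r) ^ 2 * r ^ 2 := by
          rw [hIVpolar]
  refine ⟨?_, hid, hub, ?_, ?_, ?_⟩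
  · rw [hid]; exact mul_nonneg (by positivity) hIVnn
  · rw [hJ, e1, hid]; exact mul_nonneg (by positivity) hIVnn
  · rw [hJ, hJV, e1, e2]; exact hid
  · rw [hJV, e2]; exact hub
end

section
/- For every L > R₀ the scattering function f satisfies ∫₀^L (μ f'(r)² + v(r) f(r)²) r² dr ≤ μ 𝔞₀^μ and ∫₀^L f(r)² r² dr ≥ (L − R₀)³/3; consequently ∫₀^L (μ f'(r)² + v(r) f(r)²) r² dr ≤ (3 μ 𝔞₀^μ/(L − R₀)³) · ∫₀^L f(r)² r² dr. (This says that the Rayleigh quotient of f over the ball of radius L, and hence the Neumann ground-state energy of −μΔ + v on that ball, is at most 3 μ 𝔞₀^μ/(L − R₀)³.) -/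
open Set MeasureTheory

set_option maxHeartbeats 1000000 in
/-- **Rayleigh quotient bound on balls.**  For every `L > R₀` the scattering function
`f(r) = m(r)/r` satisfies `∫₀^L (μ f'² + v f²) r² dr ≤ μ 𝔞₀^μ` and
`∫₀^L f² r² dr ≥ (L - R₀)³/3`; consequently the Rayleigh quotient of `f` on the ball of
radius `L` (hence the Neumann ground-state energy of `-μΔ + v` there) is at most
`3 μ 𝔞₀^μ/(L - R₀)³`. -/
theorem scattering_function_rayleigh_quotient
    (R₀ μ : ℝ) (hR₀ : 0 < R₀) (hμ : 0 < μ)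
    (v : ℝ → ℝ) (hv_meas : Measurable v) (hv_nonneg : ∀ r, 0 ≤ v r)
    (hv_bdd : BddAbove (Set.range v))
    (hv_supp : ∀ r, R₀ ≤ r → v r = 0)
    (m : ℝ → ℝ) (hm : ZeroEnergyScattering v R₀ μ m)
    (L : ℝ) (hL : R₀ < L) :
    ((∫ r in Set.Ioc (0 : ℝ) L,
        (μ * (deriv (fun s => m s / s) r) ^ 2 + v r * (m r / r) ^ 2) * r ^ 2)
      ≤ μ * (R₀ - m R₀)) ∧
    ((L - R₀) ^ 3 / 3 ≤ ∫ r in Set.Ioc (0 : ℝ) L, (m r / r) ^ 2 * r ^ 2) ∧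
    ((∫ r in Set.Ioc (0 : ℝ) L,
        (μ * (deriv (fun s => m s / s) r) ^ 2 + v r * (m r / r) ^ 2) * r ^ 2)
      ≤ 3 * μ * (R₀ - m R₀) / (L - R₀) ^ 3 *
          ∫ r in Set.Ioc (0 : ℝ) L, (m r / r) ^ 2 * r ^ 2) := by
  obtain ⟨hcont, hdiff, hdcont, hdiff2, hode, hzero, hpos, hrad⟩ := hm
  set a := R₀ - m R₀ with ha
  have hL0 : (0:ℝ) < L := hR₀.trans hL
  -- deriv m = 1 beyond R₀
  have hderiv_gt : ∀ r, R₀ < r → deriv m r = 1 := by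
    intro r hr
    have hev : m =ᶠ[nhds r] (fun x => x - a) := by
      filter_upwards [Ioi_mem_nhds hr] with x hx
      exact hrad x (le_of_lt hx)
    rw [hev.deriv_eq]
    simp
  have hderiv_R₀ : deriv m R₀ = 1 := by
    have h1 : Filter.Tendsto (deriv m) (nhdsWithin R₀ (Ioi R₀)) (nhds (deriv m R₀)) :=
      (hdcont R₀ (mem_Ioi.2 hR₀)).mono (Ioi_subset_Ioi hR₀.le)
    have h2 : Filter.Tendsto (deriv m) (nhdsWithin R₀ (Ioi R₀)) (nhds 1) := by
      apply Filter.Tendsto.congr' _ tendsto_const_nhds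
      filter_upwards [self_mem_nhdsWithin] with x hx
      exact (hderiv_gt x hx).symm
    exact tendsto_nhds_unique h1 h2
  have hderiv_ge : ∀ r, R₀ ≤ r → deriv m r = 1 := by
    intro r hr
    rcases eq_or_lt_of_le hr with h | h
    · rw [← h]; exact hderiv_R₀
    · exact hderiv_gt r h
  -- monotonicity of deriv m
  have hmono : MonotoneOn (deriv m) (Ioi 0) := by
    apply monotoneOn_of_deriv_nonneg (convex_Ioi 0) hdcont
    · rw [interior_Ioi]
      exact fun x hx => (hdiff2 x hx).differentiableWithinAt
    · rw [interior_Ioi]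
      intro x hx
      have h1 := hode x hx
      have h2 : deriv (deriv m) x = v x * m x / μ := by
        field_simp
        linarith
      rw [h2]
      have := hv_nonneg x
      have := (hpos x hx).le
      positivity
  have hderiv_le_one : ∀ r ∈ Ioi (0:ℝ), deriv m r ≤ 1 := by
    intro r hr
    rcases le_or_gt r R₀ with h | h
    · have := hmono hr (mem_Ioi.2 hR₀) h
      rwa [hderiv_R₀] at this
    · exact (hderiv_gt r h).le
  -- nonnegativity of deriv m
  have hderiv_nonneg : ∀ r ∈ Ioi (0:ℝ), 0 ≤ deriv m r := by
    intro s hs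
    by_contra hneg
    push_neg at hneg
    have key : ∀ r ∈ Ioo (0:ℝ) s, m s ≤ m r := by
      intro r hr
      obtain ⟨c, hc, hcs⟩ := exists_deriv_eq_slope m hr.2
        (hcont.mono (fun x hx => le_trans hr.1.le hx.1))
        (fun x hx => (hdiff x (lt_trans hr.1 hx.1)).differentiableWithinAt)
      have h1 : deriv m c ≤ deriv m s :=
        hmono (lt_trans hr.1 hc.1) hs hc.2.le
      have hsr : (0:ℝ) < s - r := sub_pos.2 hr.2
      have h2 : m s - m r = deriv m c * (s - r) := by
        rw [hcs]; field_simp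
      nlinarith
    have hlim : Filter.Tendsto m (nhdsWithin 0 (Ioi 0)) (nhds 0) := by
      have h0 := (hcont 0 self_mem_Ici).mono Ioi_subset_Ici_self
      unfold ContinuousWithinAt at h0
      rwa [hzero] at h0
    have hle : m s ≤ 0 := by
      refine ge_of_tendsto hlim ?_
      filter_upwards [Ioo_mem_nhdsGT_of_mem (⟨le_refl 0, mem_Ioi.mp hs⟩ : (0:ℝ) ∈ Ico (0:ℝ) s)]
        with r hr
      exact key r hr
    exact absurd (hpos s hs) (not_lt.2 hle)
  -- m r ≤ r
  have hmle : ∀ r, 0 ≤ r → m r ≤ r := by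
    intro r hr
    rcases eq_or_lt_of_le hr with h | h
    · rw [← h, hzero]
    · obtain ⟨c, hc, hcs⟩ := exists_deriv_eq_slope m h
        (hcont.mono (fun x hx => hx.1))
        (fun x hx => (hdiff x hx.1).differentiableWithinAt)
      have h1 : deriv m c ≤ 1 := hderiv_le_one c hc.1
      rw [hcs, hzero, sub_zero, sub_zero, div_le_one h] at h1
      exact h1
  have ha_nonneg : 0 ≤ a := by
    have := hmle R₀ hR₀.le
    rw [ha]; linarith
  have ha_lt : a < R₀ := by
    have := hpos R₀ (mem_Ioi.2 hR₀)
    rw [ha]; linarith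
  -- Part 2 : lower bound for ∫ f² r²
  have hm2cont : ContinuousOn (fun r => (m r)^2) (Icc 0 L) :=
    ((hcont.mono (fun x hx => hx.1)).pow 2)
  have hm2int : IntegrableOn (fun r => (m r)^2) (Ioc 0 L) :=
    (hm2cont.integrableOn_Icc).mono_set Ioc_subset_Icc_self
  have hI2eq : (∫ r in Ioc (0:ℝ) L, (m r / r)^2 * r^2) = ∫ r in Ioc (0:ℝ) L, (m r)^2 := by
    apply setIntegral_congr_fun measurableSet_Ioc
    intro x hx
    have hx0 : x ≠ 0 := ne_of_gt hx.1
    field_simp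
  have part2 : (L - R₀)^3 / 3 ≤ ∫ r in Ioc (0:ℝ) L, (m r / r)^2 * r^2 := by
    rw [hI2eq]
    have step1 : (∫ r in Ioc R₀ L, (m r)^2) ≤ ∫ r in Ioc (0:ℝ) L, (m r)^2 := by
      apply setIntegral_mono_set hm2int
      · filter_upwards with x using sq_nonneg _
      · exact HasSubset.Subset.eventuallyLE (Ioc_subset_Ioc_left hR₀.le)
    have step2 : (∫ r in Ioc R₀ L, (r - R₀)^2) ≤ ∫ r in Ioc R₀ L, (m r)^2 := by
      have e1 : (∫ r in Ioc R₀ L, (m r)^2) = ∫ r in Ioc R₀ L, (r - a)^2 := by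
        apply setIntegral_congr_fun measurableSet_Ioc
        intro x hx
        simp only [hrad x hx.1.le]
      rw [e1]
      apply setIntegral_mono_on
      · exact (((continuousOn_id.sub continuousOn_const).pow 2).integrableOn_Icc).mono_set
          Ioc_subset_Icc_self
      · exact (((continuousOn_id.sub continuousOn_const).pow 2).integrableOn_Icc).mono_set
          Ioc_subset_Icc_self
      · exact measurableSet_Ioc
      · intro x hx
        have h1 : R₀ ≤ x := hx.1.le
        nlinarith
    have step3 : (∫ r in Ioc R₀ L, (r - R₀)^2) = (L - R₀)^3 / 3 := by
      rw [← intervalIntegral.integral_of_le hL.le]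
      rw [intervalIntegral.integral_comp_sub_right (fun x => x^2) R₀]
      rw [integral_pow]
      norm_num
    linarith
  -- Part 1 : fundamental theorem of calculus argument
  set G : ℝ → ℝ := fun r => m r * deriv m r - (m r)^2 / r with hGdef
  set F : ℝ → ℝ := fun r =>
    (μ * (deriv (fun s => m s / s) r) ^ 2 + v r * (m r / r) ^ 2) * r ^ 2 with hFdef
  have hG0 : G 0 = 0 := by simp [hGdef, hzero]
  have hFG : ∀ x ∈ Ioo (0:ℝ) L, HasDerivAt G (F x / μ) x := by
    intro x hx
    have hx0 : (0:ℝ) < x := hx.1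
    have hdm : HasDerivAt m (deriv m x) x := (hdiff x hx0).hasDerivAt
    have hdm2 : HasDerivAt (deriv m) (deriv (deriv m) x) x := (hdiff2 x hx0).hasDerivAt
    have h1 : HasDerivAt (fun r => m r * deriv m r)
        (deriv m x * deriv m x + m x * deriv (deriv m) x) x := hdm.mul hdm2
    have h2 : HasDerivAt (fun r => (m r)^2 / r)
        ((2 * m x * deriv m x * x - (m x)^2) / x^2) x := by
      have := (hdm.pow 2).div (hasDerivAt_id x) hx0.ne'
      refine this.congr_deriv (Eq.symm ?_)
      simp
    have h3 := h1.sub h2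
    have hf' : deriv (fun s => m s / s) x = (deriv m x * x - m x) / x^2 := by
      have h4 : HasDerivAt (fun s => m s / s) ((deriv m x * x - m x * 1) / x^2) x :=
        hdm.div (hasDerivAt_id x) hx0.ne'
      rw [h4.deriv]
      ring_nf
    refine h3.congr_deriv (Eq.symm ?_)
    have hODE := hode x (mem_Ioi.2 hx0)
    have hV : v x * (m x / x)^2 = μ * deriv (deriv m) x * m x / x^2 := by
      calc v x * (m x / x)^2 = v x * m x * m x / x^2 := by ring
        _ = μ * deriv (deriv m) x * m x / x^2 := by rw [hODE]
    rw [hFdef]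
    simp only
    rw [hf', hV]
    field_simp
    ring
  have hGcont : ContinuousOn G (Icc 0 L) := by
    intro x hx
    rcases eq_or_lt_of_le hx.1 with h | h
    · -- continuity at 0 by squeeze
      rw [← h]
      have hbound : ∀ r ∈ Icc (0:ℝ) L, -(m r) ≤ G r ∧ G r ≤ m r := by
        intro r hr
        rcases eq_or_lt_of_le hr.1 with h0 | h0
        · rw [← h0]
          simp [hG0, hzero]
        · have hm0 : 0 ≤ m r := (hpos r h0).le
          have hmr : m r ≤ r := hmle r hr.1
          have hd0 : 0 ≤ deriv m r := hderiv_nonneg r h0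
          have hd1 : deriv m r ≤ 1 := hderiv_le_one r h0
          have hq : (m r)^2 / r ≤ m r := by
            rw [div_le_iff₀ h0]
            nlinarith
          have hq0 : 0 ≤ (m r)^2 / r := by positivity
          constructor
          · simp only [hGdef]
            nlinarith
          · simp only [hGdef]
            nlinarith
      have hmt : Filter.Tendsto m (nhdsWithin 0 (Icc 0 L)) (nhds 0) := by
        have h0 := (hcont 0 self_mem_Ici).mono (Icc_subset_Ici_self : Icc (0:ℝ) L ⊆ Ici 0)
        unfold ContinuousWithinAt at h0
        rwa [hzero] at h0
      have hGt : Filter.Tendsto G (nhdsWithin 0 (Icc 0 L)) (nhds 0) := by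
        apply tendsto_of_tendsto_of_tendsto_of_le_of_le' (by simpa using hmt.neg) hmt
        · filter_upwards [self_mem_nhdsWithin] with r hr using (hbound r hr).1
        · filter_upwards [self_mem_nhdsWithin] with r hr using (hbound r hr).2
      unfold ContinuousWithinAt
      rwa [hG0]
    · -- continuity at interior points
      have hGx : ContinuousAt G x := by
        have hmx : ContinuousAt m x := (hdiff x h).continuousAt
        have hdx : ContinuousAt (deriv m) x :=
          (hdcont.continuousAt (Ioi_mem_nhds h))
        exact (hmx.mul hdx).sub ((hmx.pow 2).div continuousAt_id h.ne')
      exact hGx.continuousWithinAt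
  have hFnonneg : ∀ x ∈ Ioo (0:ℝ) L, 0 ≤ F x / μ := by
    intro x hx
    rw [hFdef]
    have h1 := hv_nonneg x
    positivity
  have hintOn : IntegrableOn (fun x => F x / μ) (Ioc 0 L) :=
    intervalIntegral.integrableOn_deriv_of_nonneg hGcont hFG hFnonneg
  have hII : IntervalIntegrable (fun x => F x / μ) volume 0 L :=
    ⟨hintOn, by simp [Ioc_eq_empty (not_lt.2 hL0.le)]⟩
  have hFTC : (∫ y in (0:ℝ)..L, F y / μ) = G L - G 0 :=
    intervalIntegral.integral_eq_sub_of_hasDeriv_right_of_le hL0.le hGcont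
      (fun x hx => (hFG x hx).hasDerivWithinAt) hII
  have hEeq : (∫ r in Ioc (0:ℝ) L, F r) = μ * G L := by
    rw [intervalIntegral.integral_of_le hL0.le, MeasureTheory.integral_div, hG0, sub_zero] at hFTC
    field_simp at hFTC
    linarith
  have hGL : G L = (L - a) * a / L := by
    simp only [hGdef]
    rw [hrad L hL.le, hderiv_gt L hL]
    field_simp
    ring
  have part1 : (∫ r in Ioc (0:ℝ) L, F r) ≤ μ * a := by
    rw [hEeq, hGL]
    have h1 : (L - a) * a / L ≤ a := by
      rw [div_le_iff₀ hL0]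
      nlinarith [sq_nonneg a]
    nlinarith
  refine ⟨part1, part2, ?_⟩
  have hLR : (0:ℝ) < (L - R₀)^3 := pow_pos (sub_pos.2 hL) 3
  have hc : 0 ≤ 3 * μ * a / (L - R₀)^3 :=
    div_nonneg (by nlinarith) hLR.le
  calc (∫ r in Ioc (0:ℝ) L, F r) ≤ μ * a := part1
    _ = 3 * μ * a / (L - R₀)^3 * ((L - R₀)^3 / 3) := by
        have h1 : (L - R₀)^3 ≠ 0 := ne_of_gt hLR
        have h2 : L - R₀ ≠ 0 := (sub_pos.2 hL).ne'
        field_simp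
    _ ≤ 3 * μ * a / (L - R₀)^3 * ∫ r in Ioc (0:ℝ) L, (m r / r)^2 * r^2 :=
        mul_le_mul_of_nonneg_left part2 hc
end

section
/- There exist a constant C > 0 and a threshold L₀ ≥ R₀, depending only on v and R₀, with the following property. Suppose L ≥ L₀, 0 ≤ E ≤ 3 μ 𝔞₀^μ/(L − R₀)³, and f_L is the Neumann scattering function of a Neumann scattering solution with energy E. Then for all 0 < r ≤ L one has the pointwise gradient bounds |f_L'(r)| ≤ (𝔞₀^μ + C R₀²/L)/r² and |f_L'(r)| ≤ (2 + C R₀/L)/r. -/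
open Set MeasureTheory

/-- A Neumann scattering solution `m₁` with energy `E` on `[0, L]`: it satisfies
`μ m₁'' = (v - E) m₁` on `(0,L)`, is continuous on `[0,L]` and continuously differentiable
on `(0,L]`, with `m₁(0) = 0`, `m₁ > 0` on `(0,L]`, `m₁(L) = L` and `m₁'(L) = 1`.  The Neumann
scattering function is `f_L(r) = m₁(r)/r`. -/
structure NeumannScattering (v : ℝ → ℝ) (μ L E : ℝ) (m₁ : ℝ → ℝ) : Prop where
  cont : ContinuousOn m₁ (Set.Icc 0 L)
  diff : ∀ r ∈ Set.Ioc (0 : ℝ) L, DifferentiableAt ℝ m₁ r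
  derivCont : ContinuousOn (deriv m₁) (Set.Ioc 0 L)
  diff2 : ∀ r ∈ Set.Ioo (0 : ℝ) L, DifferentiableAt ℝ (deriv m₁) r
  ode : ∀ r ∈ Set.Ioo (0 : ℝ) L, μ * deriv (deriv m₁) r = (v r - E) * m₁ r
  zero : m₁ 0 = 0
  pos : ∀ r ∈ Set.Ioc (0 : ℝ) L, 0 < m₁ r
  bc : m₁ L = L
  bc' : deriv m₁ L = 1

namespace NeumannScattering

variable {v : ℝ → ℝ} {R₀ μ L E : ℝ} {m₁ : ℝ → ℝ}

/-- `m₁` is nonnegative on `[0, L]`. -/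
lemma m1_nonneg (ns : NeumannScattering v μ L E m₁) :
    ∀ s ∈ Icc (0:ℝ) L, 0 ≤ m₁ s := by
  intro s hs
  rcases eq_or_lt_of_le hs.1 with h | h
  · simp [← h, ns.zero]
  · exact (ns.pos s ⟨h, hs.2⟩).le

/-- On `(R₀, L)` the second derivative of `m₁` is `-(E/μ) m₁`. -/
lemma d2_exact (ns : NeumannScattering v μ L E m₁) (hR₀ : 0 < R₀) (hμ : 0 < μ)
    (hv_supp : ∀ r, R₀ ≤ r → v r = 0) :
    ∀ x ∈ Ioo R₀ L, deriv (deriv m₁) x = -(E / μ * m₁ x) := by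
  intro x hx
  have hxm : x ∈ Ioo (0:ℝ) L := ⟨lt_trans hR₀ hx.1, hx.2⟩
  have hode := ns.ode x hxm
  rw [hv_supp x hx.1.le] at hode
  apply mul_left_cancel₀ hμ.ne'
  rw [hode]
  field_simp
  ring

/-- `m₁'` is antitone on `[R₀, L]`. -/
lemma d_antitone (ns : NeumannScattering v μ L E m₁) (hR₀ : 0 < R₀) (hμ : 0 < μ)
    (hE : 0 ≤ E) (hR₀L : R₀ < L) (hv_supp : ∀ r, R₀ ≤ r → v r = 0) :
    AntitoneOn (deriv m₁) (Icc R₀ L) := by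
  apply antitoneOn_of_deriv_nonpos (convex_Icc _ _)
    (ns.derivCont.mono (fun x hx => ⟨lt_of_lt_of_le hR₀ hx.1, hx.2⟩))
  · rw [interior_Icc]
    intro x hx
    exact (ns.diff2 x ⟨lt_trans hR₀ hx.1, hx.2⟩).differentiableWithinAt
  · rw [interior_Icc]
    intro x hx
    rw [ns.d2_exact hR₀ hμ hv_supp x hx]
    have hm := ns.pos x ⟨lt_trans hR₀ hx.1, hx.2.le⟩
    exact neg_nonpos.2 (mul_nonneg (div_nonneg hE hμ.le) hm.le)

/-- `m₁' ≥ 1` on `[R₀, L]`. -/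
lemma d_ge_one (ns : NeumannScattering v μ L E m₁) (hR₀ : 0 < R₀) (hμ : 0 < μ)
    (hE : 0 ≤ E) (hR₀L : R₀ < L) (hv_supp : ∀ r, R₀ ≤ r → v r = 0) :
    ∀ s ∈ Icc R₀ L, 1 ≤ deriv m₁ s := by
  intro s hs
  have := ns.d_antitone hR₀ hμ hE hR₀L hv_supp hs (right_mem_Icc.2 hR₀L.le) hs.2
  rwa [ns.bc'] at this

/-- `m₁(s) ≤ s` on `[R₀, L]`. -/
lemma m1_le (ns : NeumannScattering v μ L E m₁) (hR₀ : 0 < R₀) (hμ : 0 < μ)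
    (hE : 0 ≤ E) (hR₀L : R₀ < L) (hv_supp : ∀ r, R₀ ≤ r → v r = 0) :
    ∀ s ∈ Icc R₀ L, m₁ s ≤ s := by
  have hd_ge1 := ns.d_ge_one hR₀ hμ hE hR₀L hv_supp
  have hmono : MonotoneOn (fun s => m₁ s - s) (Icc R₀ L) := by
    apply monotoneOn_of_deriv_nonneg (convex_Icc _ _)
    · exact (ns.cont.mono (Icc_subset_Icc hR₀.le le_rfl)).sub continuousOn_id
    · rw [interior_Icc]
      intro x hx
      exact ((ns.diff x ⟨lt_trans hR₀ hx.1, hx.2.le⟩).sub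
        differentiableAt_fun_id).differentiableWithinAt
    · rw [interior_Icc]
      intro x hx
      have h : HasDerivAt (fun s => m₁ s - s) (deriv m₁ x - 1) x :=
        (ns.diff x ⟨lt_trans hR₀ hx.1, hx.2.le⟩).hasDerivAt.sub (hasDerivAt_id x)
      rw [h.deriv]
      linarith [hd_ge1 x (Ioo_subset_Icc_self hx)]
  intro s hs
  have := hmono hs (right_mem_Icc.2 hR₀L.le) hs.2
  simp only [ns.bc] at this
  linarith


/-- The maximum-principle bound `m₁(s) ≤ 2s` on `[0, R₀]`, provided `(E/μ) R₀² ≤ 1`. -/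
lemma m1_le_two (ns : NeumannScattering v μ L E m₁) (hR₀ : 0 < R₀) (hμ : 0 < μ)
    (hE : 0 ≤ E) (hR₀L : R₀ < L) (hv_nonneg : ∀ r, 0 ≤ v r)
    (hv_supp : ∀ r, R₀ ≤ r → v r = 0) (hk2R2 : E / μ * R₀ ^ 2 ≤ 1) :
    ∀ s ∈ Icc (0:ℝ) R₀, m₁ s ≤ 2 * s := by
  have hm0 := ns.m1_nonneg
  have hmR₀ : m₁ R₀ ≤ R₀ := ns.m1_le hR₀ hμ hE hR₀L hv_supp R₀ (left_mem_Icc.2 hR₀L.le)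
  set k2 := E / μ with hk2_def
  have hk2 : 0 ≤ k2 := div_nonneg hE hμ.le
  have hEk : E = μ * k2 := by rw [hk2_def]; field_simp
  have hsubIooIoc : Ioo (0:ℝ) L ⊆ Ioc 0 L := Ioo_subset_Ioc_self
  obtain ⟨t0, ht0, hmax⟩ := isCompact_Icc.exists_isMaxOn (nonempty_Icc.2 hR₀.le)
    (ns.cont.mono (Icc_subset_Icc le_rfl hR₀L.le))
  set S := m₁ t0 with hS_def
  have hSub : ∀ s ∈ Icc (0:ℝ) R₀, m₁ s ≤ S := fun s hs => hmax hs
  have hS0 : 0 ≤ S := by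
    have := hSub 0 (left_mem_Icc.2 hR₀.le)
    rwa [ns.zero] at this
  set c := k2 * S / 2 with hc_def
  have hc0 : 0 ≤ c := by
    rw [hc_def]
    positivity
  have hfd : ∀ y ∈ Ioc (0:ℝ) L, deriv (fun s => m₁ s + c * s ^ 2) y
      = deriv m₁ y + 2 * c * y := by
    intro y hy
    have hpow : HasDerivAt (fun s : ℝ => c * s ^ 2) (2 * c * y) y := by
      have h := (hasDerivAt_pow 2 y).const_mul c
      refine h.congr_deriv ?_
      push_cast
      ring
    have h : HasDerivAt (fun s => m₁ s + c * s ^ 2) (deriv m₁ y + 2 * c * y) y :=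
      (ns.diff y hy).hasDerivAt.add hpow
    rw [h.deriv]
  have hconv : ConvexOn ℝ (Icc 0 R₀) (fun s => m₁ s + c * s ^ 2) := by
    apply convexOn_of_deriv2_nonneg (convex_Icc _ _)
    · exact (ns.cont.mono (Icc_subset_Icc le_rfl hR₀L.le)).add
        ((continuous_const.mul (continuous_pow 2)).continuousOn)
    · rw [interior_Icc]
      intro x hx
      exact ((ns.diff x ⟨hx.1, (hx.2.trans hR₀L).le⟩).add
        ((differentiableAt_pow 2).const_mul c)).differentiableWithinAt
    · rw [interior_Icc]
      intro x hx
      have hev : deriv (fun s => m₁ s + c * s ^ 2) =ᶠ[nhds x]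
          fun y => deriv m₁ y + 2 * c * y := by
        filter_upwards [Ioo_mem_nhds hx.1 (hx.2.trans hR₀L)] with y hy
        exact hfd y (hsubIooIoc hy)
      refine ((hev.differentiableAt_iff).2 ?_).differentiableWithinAt
      exact (ns.diff2 x ⟨hx.1, hx.2.trans hR₀L⟩).add (differentiableAt_fun_id.const_mul (2 * c))
    · rw [interior_Icc]
      intro x hx
      have hx' : x ∈ Ioo (0:ℝ) L := ⟨hx.1, hx.2.trans hR₀L⟩
      have hev : deriv (fun s => m₁ s + c * s ^ 2) =ᶠ[nhds x]
          fun y => deriv m₁ y + 2 * c * y := by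
        filter_upwards [Ioo_mem_nhds hx.1 (hx.2.trans hR₀L)] with y hy
        exact hfd y (hsubIooIoc hy)
      have hd2 : HasDerivAt (fun y => deriv m₁ y + 2 * c * y)
          (deriv (deriv m₁) x + 2 * c) x := by
        have h := (ns.diff2 x hx').hasDerivAt.add ((hasDerivAt_id x).const_mul (2 * c))
        refine h.congr_deriv ?_
        ring
      have hiter : deriv^[2] (fun s => m₁ s + c * s ^ 2) x
          = deriv (deriv m₁) x + 2 * c := by
        show deriv (deriv (fun s => m₁ s + c * s ^ 2)) x = _
        rw [hev.deriv_eq, hd2.deriv]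
      rw [hiter]
      have hode := ns.ode x hx'
      rw [hEk] at hode
      have hmS := hSub x ⟨hx.1.le, hx.2.le⟩
      have hm0x := hm0 x ⟨hx.1.le, (hx.2.trans hR₀L).le⟩
      have hc2 : 2 * c = k2 * S := by rw [hc_def]; ring
      nlinarith [mul_nonneg (hv_nonneg x) hm0x,
        mul_nonneg (mul_nonneg hμ.le hk2) (sub_nonneg.2 hmS)]
  have key : ∀ s ∈ Icc (0:ℝ) R₀, m₁ s ≤ s * (1 + c * R₀) := by
    intro s hs
    have h2 := hconv.2 (left_mem_Icc.2 hR₀.le) (right_mem_Icc.2 hR₀.le)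
      (sub_nonneg.2 ((div_le_one hR₀).2 hs.2))
      (div_nonneg hs.1 hR₀.le) (by ring)
    simp only [smul_eq_mul, mul_zero, zero_add] at h2
    rw [div_mul_cancel₀ _ hR₀.ne'] at h2
    rw [ns.zero] at h2
    norm_num at h2
    have h3 : s / R₀ * (m₁ R₀ + c * R₀ ^ 2) ≤ s * (1 + c * R₀) := by
      rw [div_mul_eq_mul_div, div_le_iff₀ hR₀]
      nlinarith [mul_le_mul_of_nonneg_left hmR₀ hs.1]
    nlinarith [mul_nonneg hc0 (sq_nonneg s)]
  have hS2R : S ≤ 2 * R₀ := by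
    have hk := key t0 ht0
    have hcR : 0 ≤ 1 + c * R₀ := by positivity
    have ht0R : t0 * (1 + c * R₀) ≤ R₀ * (1 + c * R₀) :=
      mul_le_mul_of_nonneg_right ht0.2 hcR
    have hcs : R₀ * (1 + c * R₀) = R₀ + k2 * R₀ ^ 2 * S / 2 := by rw [hc_def]; ring
    nlinarith [mul_le_mul_of_nonneg_right hk2R2 hS0]
  intro s hs
  have hk := key s hs
  have h1 : k2 * S * R₀ ≤ 2 := by
    nlinarith [mul_nonneg (mul_nonneg hk2 hR₀.le) (sub_nonneg.2 hS2R)]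
  have h2 : s * (1 + c * R₀) = s + s * (k2 * S * R₀) / 2 := by rw [hc_def]; ring
  nlinarith [mul_nonneg hs.1 (sub_nonneg.2 h1)]

/-- Energy conservation on `[R₀, L]` gives `m₁'(R₀) ≤ 1 + (E/μ) L²/2`. -/
lemma dR0_bound (ns : NeumannScattering v μ L E m₁) (hR₀ : 0 < R₀) (hμ : 0 < μ)
    (hE : 0 ≤ E) (hR₀L : R₀ < L) (hv_supp : ∀ r, R₀ ≤ r → v r = 0) :
    deriv m₁ R₀ ≤ 1 + E / μ * L ^ 2 / 2 := by
  set k2 := E / μ with hk2_def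
  have hk2 : 0 ≤ k2 := div_nonneg hE hμ.le
  have hEk : E = μ * k2 := by rw [hk2_def]; field_simp
  have hsubIccIoc : Icc R₀ L ⊆ Ioc 0 L := fun x hx => ⟨lt_of_lt_of_le hR₀ hx.1, hx.2⟩
  have hsubIooIoc : Ioo (0:ℝ) L ⊆ Ioc 0 L := Ioo_subset_Ioc_self
  have hQd : ∀ x ∈ Ioo R₀ L, HasDerivAt (fun s => μ * deriv m₁ s ^ 2 + E * m₁ s ^ 2)
      (2 * deriv m₁ x * (μ * deriv (deriv m₁) x + E * m₁ x)) x := by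
    intro x hx
    have hxm : x ∈ Ioo (0:ℝ) L := ⟨lt_trans hR₀ hx.1, hx.2⟩
    have h1 := (ns.diff x (hsubIooIoc hxm)).hasDerivAt
    have h2 := (ns.diff2 x hxm).hasDerivAt
    have h := ((h2.pow 2).const_mul μ).add ((h1.pow 2).const_mul E)
    refine h.congr_deriv ?_
    push_cast
    ring
  have hQmono : MonotoneOn (fun s => μ * deriv m₁ s ^ 2 + E * m₁ s ^ 2) (Icc R₀ L) := by
    apply monotoneOn_of_deriv_nonneg (convex_Icc _ _)
    · exact (continuousOn_const.mul ((ns.derivCont.mono hsubIccIoc).pow 2)).add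
        (continuousOn_const.mul ((ns.cont.mono (Icc_subset_Icc hR₀.le le_rfl)).pow 2))
    · rw [interior_Icc]
      intro x hx
      exact (hQd x hx).differentiableAt.differentiableWithinAt
    · rw [interior_Icc]
      intro x hx
      rw [(hQd x hx).deriv]
      have hxm : x ∈ Ioo (0:ℝ) L := ⟨lt_trans hR₀ hx.1, hx.2⟩
      have h0 : μ * deriv (deriv m₁) x + E * m₁ x = 0 := by
        rw [ns.ode x hxm, hv_supp x hx.1.le]
        ring
      rw [h0]
      ring_nf
      exact le_refl 0
  have hQle := hQmono (left_mem_Icc.2 hR₀L.le) (right_mem_Icc.2 hR₀L.le) hR₀L.le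
  simp only [ns.bc, ns.bc'] at hQle
  rw [hEk] at hQle
  have hsq : deriv m₁ R₀ ^ 2 ≤ 1 + k2 * L ^ 2 := by
    nlinarith [mul_nonneg (mul_nonneg hμ.le hk2) (sq_nonneg (m₁ R₀))]
  have hX1 : 1 ≤ deriv m₁ R₀ :=
    ns.d_ge_one hR₀ hμ hE hR₀L hv_supp R₀ (left_mem_Icc.2 hR₀L.le)
  nlinarith [mul_nonneg hk2 (sq_nonneg L), sq_nonneg (k2 * L ^ 2)]

/-- Derivative of `g(s) = s m₁'(s) - m₁(s)`. -/
lemma g_hasDeriv (ns : NeumannScattering v μ L E m₁) :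
    ∀ x ∈ Ioo (0:ℝ) L, HasDerivAt (fun s => s * deriv m₁ s - m₁ s)
      (x * deriv (deriv m₁) x) x := by
  intro x hx
  have h1 := (ns.diff x (Ioo_subset_Ioc_self hx)).hasDerivAt
  have h2 := (ns.diff2 x hx).hasDerivAt
  have h3 : HasDerivAt (fun y => y * deriv m₁ y - m₁ y)
      (1 * deriv m₁ x + x * deriv (deriv m₁) x - deriv m₁ x) x :=
    ((hasDerivAt_id x).mul h2).sub h1
  have h4 : 1 * deriv m₁ x + x * deriv (deriv m₁) x - deriv m₁ x
      = x * deriv (deriv m₁) x := by ring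
  rw [h4] at h3
  exact h3

lemma g_cont (ns : NeumannScattering v μ L E m₁) :
    ContinuousOn (fun s => s * deriv m₁ s - m₁ s) (Ioc 0 L) :=
  (continuousOn_id.mul ns.derivCont).sub (ns.cont.mono Ioc_subset_Icc_self)

/-- `g ≥ 0` on `[R₀, L]`. -/
lemma g_nonneg (ns : NeumannScattering v μ L E m₁) (hR₀ : 0 < R₀) (hμ : 0 < μ)
    (hE : 0 ≤ E) (hR₀L : R₀ < L) (hv_supp : ∀ r, R₀ ≤ r → v r = 0) :
    ∀ s ∈ Icc R₀ L, 0 ≤ s * deriv m₁ s - m₁ s := by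
  have hk2 : 0 ≤ E / μ := div_nonneg hE hμ.le
  have hgL : L * deriv m₁ L - m₁ L = 0 := by rw [ns.bc, ns.bc']; ring
  have hganti : AntitoneOn (fun s => s * deriv m₁ s - m₁ s) (Icc R₀ L) := by
    apply antitoneOn_of_deriv_nonpos (convex_Icc _ _)
      (ns.g_cont.mono (fun x hx => ⟨lt_of_lt_of_le hR₀ hx.1, hx.2⟩))
    · rw [interior_Icc]
      intro x hx
      exact (ns.g_hasDeriv x
        ⟨lt_trans hR₀ hx.1, hx.2⟩).differentiableAt.differentiableWithinAt
    · rw [interior_Icc]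
      intro x hx
      have hxm : x ∈ Ioo (0:ℝ) L := ⟨lt_trans hR₀ hx.1, hx.2⟩
      rw [(ns.g_hasDeriv x hxm).deriv, ns.d2_exact hR₀ hμ hv_supp x hx]
      have hm := ns.pos x (Ioo_subset_Ioc_self hxm)
      nlinarith [mul_nonneg hk2 hm.le, hxm.1]
  intro s hs
  have h : L * deriv m₁ L - m₁ L ≤ s * deriv m₁ s - m₁ s :=
    hganti hs (right_mem_Icc.2 hR₀L.le) hs.2
  linarith [hgL]

/-- `g ≤ (E/μ) L³/3` on `[R₀, L]`. -/
lemma g_up (ns : NeumannScattering v μ L E m₁) (hR₀ : 0 < R₀) (hμ : 0 < μ)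
    (hE : 0 ≤ E) (hR₀L : R₀ < L) (hv_supp : ∀ r, R₀ ≤ r → v r = 0) :
    ∀ s ∈ Icc R₀ L, s * deriv m₁ s - m₁ s ≤ E / μ * L ^ 3 / 3 := by
  set k2 := E / μ with hk2_def
  have hk2 : 0 ≤ k2 := div_nonneg hE hμ.le
  have hmle := ns.m1_le hR₀ hμ hE hR₀L hv_supp
  have hgL : L * deriv m₁ L - m₁ L = 0 := by rw [ns.bc, ns.bc']; ring
  have hφmono : MonotoneOn
      (fun t => (t * deriv m₁ t - m₁ t) - k2 * (L ^ 3 - t ^ 3) / 3) (Icc R₀ L) := by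
    apply monotoneOn_of_deriv_nonneg (convex_Icc _ _)
    · exact (ns.g_cont.mono (fun x hx => ⟨lt_of_lt_of_le hR₀ hx.1, hx.2⟩)).sub
        (((continuous_const.mul (continuous_const.sub (continuous_pow 3))).div_const
          3).continuousOn)
    · rw [interior_Icc]
      intro x hx
      have hxm : x ∈ Ioo (0:ℝ) L := ⟨lt_trans hR₀ hx.1, hx.2⟩
      exact ((ns.g_hasDeriv x hxm).differentiableAt.sub
        ((((differentiableAt_const _).sub (differentiableAt_pow 3)).const_mul
          k2).div_const 3)).differentiableWithinAt
    · rw [interior_Icc]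
      intro x hx
      have hxm : x ∈ Ioo (0:ℝ) L := ⟨lt_trans hR₀ hx.1, hx.2⟩
      have hc : HasDerivAt (fun t : ℝ => k2 * (L ^ 3 - t ^ 3) / 3)
          (k2 * (0 - 3 * x ^ 2) / 3) x := by
        apply HasDerivAt.div_const
        apply HasDerivAt.const_mul
        have h := (hasDerivAt_const x (L ^ 3)).sub (hasDerivAt_pow 3 x)
        refine h.congr_deriv ?_
        all_goals (push_cast; ring)
      have hder : HasDerivAt
          (fun t => (t * deriv m₁ t - m₁ t) - k2 * (L ^ 3 - t ^ 3) / 3)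
          (x * deriv (deriv m₁) x - k2 * (0 - 3 * x ^ 2) / 3) x :=
        (ns.g_hasDeriv x hxm).sub hc
      rw [hder.deriv, ns.d2_exact hR₀ hμ hv_supp x hx]
      have hmx := hmle x (Ioo_subset_Icc_self hx)
      nlinarith [mul_nonneg (mul_nonneg hk2 (lt_trans hR₀ hx.1).le) (sub_nonneg.2 hmx)]
  intro s hs
  have h : (s * deriv m₁ s - m₁ s) - k2 * (L ^ 3 - s ^ 3) / 3 ≤
      (L * deriv m₁ L - m₁ L) - k2 * (L ^ 3 - L ^ 3) / 3 :=
    hφmono hs (right_mem_Icc.2 hR₀L.le) hs.2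
  have hs3 : 0 ≤ s ^ 3 := pow_nonneg (le_trans hR₀.le hs.1) 3
  nlinarith [mul_nonneg hk2 hs3, hgL]

/-- Monotonicity of `ψ(t) = g(t) + (2/3)(E/μ) t³` on `(0, R₀]`. -/
lemma psi_mono (ns : NeumannScattering v μ L E m₁) (hR₀ : 0 < R₀) (hμ : 0 < μ)
    (hE : 0 ≤ E) (hR₀L : R₀ < L) (hv_nonneg : ∀ r, 0 ≤ v r)
    (hm2 : ∀ s ∈ Icc (0:ℝ) R₀, m₁ s ≤ 2 * s) :
    ∀ s t : ℝ, 0 < s → s ≤ t → t ≤ R₀ →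
      (s * deriv m₁ s - m₁ s) + 2 * (E / μ) / 3 * s ^ 3 ≤
      (t * deriv m₁ t - m₁ t) + 2 * (E / μ) / 3 * t ^ 3 := by
  set k2 := E / μ with hk2_def
  have hk2 : 0 ≤ k2 := div_nonneg hE hμ.le
  have hEk : E = μ * k2 := by rw [hk2_def]; field_simp
  have hm0 := ns.m1_nonneg
  intro s t hs hst htR
  have hsub2 : Icc s R₀ ⊆ Ioc 0 L :=
    fun x hx => ⟨lt_of_lt_of_le hs hx.1, hx.2.trans hR₀L.le⟩
  have hmono : MonotoneOn
      (fun t => (t * deriv m₁ t - m₁ t) + 2 * k2 / 3 * t ^ 3) (Icc s R₀) := by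
    apply monotoneOn_of_deriv_nonneg (convex_Icc _ _)
    · exact (ns.g_cont.mono hsub2).add
        ((continuous_const.mul (continuous_pow 3)).continuousOn)
    · rw [interior_Icc]
      intro x hx
      have hxm : x ∈ Ioo (0:ℝ) L := ⟨lt_trans hs hx.1, lt_trans hx.2 hR₀L⟩
      exact ((ns.g_hasDeriv x hxm).differentiableAt.add
        ((differentiableAt_pow 3).const_mul _)).differentiableWithinAt
    · rw [interior_Icc]
      intro x hx
      have hxm : x ∈ Ioo (0:ℝ) L := ⟨lt_trans hs hx.1, lt_trans hx.2 hR₀L⟩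
      have hc : HasDerivAt (fun t : ℝ => 2 * k2 / 3 * t ^ 3)
          (2 * k2 / 3 * (3 * x ^ 2)) x := by
        have h := (hasDerivAt_pow 3 x).const_mul (2 * k2 / 3)
        refine h.congr_deriv ?_
        all_goals (push_cast; ring)
      have hder : HasDerivAt
          (fun t => (t * deriv m₁ t - m₁ t) + 2 * k2 / 3 * t ^ 3)
          (x * deriv (deriv m₁) x + 2 * k2 / 3 * (3 * x ^ 2)) x :=
        (ns.g_hasDeriv x hxm).add hc
      rw [hder.deriv]
      have hodex : μ * (x * deriv (deriv m₁) x) = x * ((v x - μ * k2) * m₁ x) := by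
        have h := ns.ode x hxm
        rw [hEk] at h
        calc μ * (x * deriv (deriv m₁) x) = x * (μ * deriv (deriv m₁) x) := by ring
        _ = x * ((v x - μ * k2) * m₁ x) := by rw [h]
      have hm2x := hm2 x ⟨hxm.1.le, hx.2.le⟩
      have hm0x := hm0 x ⟨hxm.1.le, hxm.2.le⟩
      nlinarith [mul_nonneg (mul_nonneg hxm.1.le (hv_nonneg x)) hm0x,
        mul_nonneg (mul_nonneg (mul_nonneg hμ.le hk2) hxm.1.le) (sub_nonneg.2 hm2x)]
  exact hmono (left_mem_Icc.2 (hst.trans htR)) ⟨hst, htR⟩ hst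

/-- Upper bound for `m₁'` on `(0, R₀]`. -/
lemma d_up (ns : NeumannScattering v μ L E m₁) (hR₀ : 0 < R₀) (hμ : 0 < μ)
    (hE : 0 ≤ E) (hR₀L : R₀ < L) (hv_nonneg : ∀ r, 0 ≤ v r)
    (hm2 : ∀ s ∈ Icc (0:ℝ) R₀, m₁ s ≤ 2 * s) :
    ∀ s : ℝ, 0 < s → s ≤ R₀ → deriv m₁ s ≤ deriv m₁ R₀ + E / μ * R₀ ^ 2 := by
  set k2 := E / μ with hk2_def
  have hk2 : 0 ≤ k2 := div_nonneg hE hμ.le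
  have hEk : E = μ * k2 := by rw [hk2_def]; field_simp
  have hm0 := ns.m1_nonneg
  intro s hs hsR
  have hsub2 : Icc s R₀ ⊆ Ioc 0 L :=
    fun x hx => ⟨lt_of_lt_of_le hs hx.1, hx.2.trans hR₀L.le⟩
  have hmono : MonotoneOn (fun t => deriv m₁ t + k2 * t ^ 2) (Icc s R₀) := by
    apply monotoneOn_of_deriv_nonneg (convex_Icc _ _)
    · exact (ns.derivCont.mono hsub2).add
        ((continuous_const.mul (continuous_pow 2)).continuousOn)
    · rw [interior_Icc]
      intro x hx
      have hxm : x ∈ Ioo (0:ℝ) L := ⟨lt_trans hs hx.1, lt_trans hx.2 hR₀L⟩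
      exact ((ns.diff2 x hxm).add
        ((differentiableAt_pow 2).const_mul _)).differentiableWithinAt
    · rw [interior_Icc]
      intro x hx
      have hxm : x ∈ Ioo (0:ℝ) L := ⟨lt_trans hs hx.1, lt_trans hx.2 hR₀L⟩
      have hc : HasDerivAt (fun t : ℝ => k2 * t ^ 2) (k2 * (2 * x)) x := by
        have h := (hasDerivAt_pow 2 x).const_mul k2
        refine h.congr_deriv ?_
        all_goals (push_cast; ring)
      have hder : HasDerivAt (fun t => deriv m₁ t + k2 * t ^ 2)
          (deriv (deriv m₁) x + k2 * (2 * x)) x :=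
        (ns.diff2 x hxm).hasDerivAt.add hc
      rw [hder.deriv]
      have hode := ns.ode x hxm
      rw [hEk] at hode
      have hm2x := hm2 x ⟨hxm.1.le, hx.2.le⟩
      have hm0x := hm0 x ⟨hxm.1.le, hxm.2.le⟩
      nlinarith [mul_nonneg (hv_nonneg x) hm0x,
        mul_nonneg (mul_nonneg hμ.le hk2) (sub_nonneg.2 hm2x)]
  have h : deriv m₁ s + k2 * s ^ 2 ≤ deriv m₁ R₀ + k2 * R₀ ^ 2 :=
    hmono (left_mem_Icc.2 hsR) (right_mem_Icc.2 hsR) hsR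
  nlinarith [mul_nonneg hk2 (sq_nonneg s)]

/-- Lower bound `g(s) ≥ -(2/3)(E/μ) s³` on `(0, R₀]`. -/
lemma g_lo (ns : NeumannScattering v μ L E m₁) (hR₀ : 0 < R₀) (hμ : 0 < μ)
    (hE : 0 ≤ E) (hR₀L : R₀ < L)
    (hψmono : ∀ s t : ℝ, 0 < s → s ≤ t → t ≤ R₀ →
      (s * deriv m₁ s - m₁ s) + 2 * (E / μ) / 3 * s ^ 3 ≤
      (t * deriv m₁ t - m₁ t) + 2 * (E / μ) / 3 * t ^ 3) :
    ∀ s : ℝ, 0 < s → s ≤ R₀ →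
      -(2 * (E / μ) / 3 * s ^ 3) ≤ s * deriv m₁ s - m₁ s := by
  set k2 := E / μ with hk2_def
  have hk2 : 0 ≤ k2 := div_nonneg hE hμ.le
  have hL0 : (0:ℝ) < L := lt_trans hR₀ hR₀L
  intro s hs hsR
  by_contra hcon
  push_neg at hcon
  obtain ⟨δ, hδ, hδeq⟩ : ∃ δ : ℝ, 0 < δ ∧
      (s * deriv m₁ s - m₁ s) + 2 * k2 / 3 * s ^ 3 = -δ :=
    ⟨-((s * deriv m₁ s - m₁ s) + 2 * k2 / 3 * s ^ 3), by linarith, by ring⟩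
  have hgle : ∀ t : ℝ, 0 < t → t ≤ s → t * deriv m₁ t - m₁ t ≤ -δ := by
    intro t ht hts
    have h := hψmono t s ht hts hsR
    have ht3 : 0 ≤ 2 * k2 / 3 * t ^ 3 := by positivity
    linarith
  obtain ⟨W, hW_def⟩ : ∃ W : ℝ, W = (m₁ s - δ / 2) / s := ⟨_, rfl⟩
  have hwanti : AntitoneOn (fun t => (m₁ t - δ / 2) / t) (Ioc 0 s) := by
    apply antitoneOn_of_deriv_nonpos (convex_Ioc 0 s)
    · refine ContinuousOn.div ((ns.cont.mono ?_).sub continuousOn_const) continuousOn_id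
        (fun x hx => ne_of_gt hx.1)
      exact fun x hx => ⟨hx.1.le, hx.2.trans (hsR.trans hR₀L.le)⟩
    · rw [interior_Ioc]
      intro x hx
      have hxIoc : x ∈ Ioc 0 L := ⟨hx.1, (hx.2.le.trans hsR).trans hR₀L.le⟩
      exact (((ns.diff x hxIoc).sub_const (δ / 2)).div differentiableAt_fun_id
        (ne_of_gt hx.1)).differentiableWithinAt
    · rw [interior_Ioc]
      intro x hx
      have hxIoc : x ∈ Ioc 0 L := ⟨hx.1, (hx.2.le.trans hsR).trans hR₀L.le⟩
      have hd : HasDerivAt (fun t => (m₁ t - δ / 2) / t)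
          ((deriv m₁ x * x - (m₁ x - δ / 2) * 1) / x ^ 2) x :=
        ((ns.diff x hxIoc).hasDerivAt.sub_const (δ / 2)).div (hasDerivAt_id x)
          (ne_of_gt hx.1)
      rw [hd.deriv]
      apply div_nonpos_of_nonpos_of_nonneg _ (sq_nonneg x)
      have hgx := hgle x hx.1 hx.2.le
      nlinarith
  have hlim : Filter.Tendsto m₁ (nhdsWithin 0 (Ioi 0)) (nhds 0) := by
    have hct := (ns.cont 0 (left_mem_Icc.2 hL0.le)).tendsto
    rw [ns.zero] at hct
    rw [← nhdsWithin_Ioc_eq_nhdsGT hL0]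
    exact hct.mono_left (nhdsWithin_mono 0 Ioc_subset_Icc_self)
  have hidlim : Filter.Tendsto (fun t : ℝ => t) (nhdsWithin 0 (Ioi 0)) (nhds 0) :=
    Filter.tendsto_id.mono_left nhdsWithin_le_nhds
  have hev1 : ∀ᶠ t in nhdsWithin 0 (Ioi 0), m₁ t < δ / 4 :=
    hlim.eventually_lt_const (by positivity)
  have hev2 : ∀ᶠ t in nhdsWithin 0 (Ioi 0), t < δ / (4 * (|W| + 1)) :=
    hidlim.eventually_lt_const (by positivity)
  have hev3 : ∀ᶠ t in nhdsWithin 0 (Ioi 0), t < s := hidlim.eventually_lt_const hs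
  obtain ⟨t, ⟨⟨ht1, ht2⟩, ht3⟩, ht0⟩ :=
    (((hev1.and hev2).and hev3).and eventually_mem_nhdsWithin).exists
  rw [mem_Ioi] at ht0
  have htIoc : t ∈ Ioc 0 s := ⟨ht0, ht3.le⟩
  have hWt : W ≤ (m₁ t - δ / 2) / t := by
    have h : (m₁ s - δ / 2) / s ≤ (m₁ t - δ / 2) / t :=
      hwanti htIoc (right_mem_Ioc.2 hs) ht3.le
    rw [hW_def]
    exact h
  rw [le_div_iff₀ ht0] at hWt
  -- W * t ≤ m₁ t - δ/2
  have habs : -(|W| * t) ≤ W * t := by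
    nlinarith [neg_abs_le W, ht0.le]
  have ht2' : (|W| + 1) * t < δ / 4 := by
    rw [lt_div_iff₀ (by positivity)] at ht2
    nlinarith [abs_nonneg W]
  nlinarith [abs_nonneg W, ht0.le]

end NeumannScattering

/-- The scattering length `𝔞₀ = R₀ - m(R₀)` of a zero-energy scattering solution is
nonnegative, since `m` is convex with `m(0) = 0` and slope `1` past `R₀`. -/
lemma ZeroEnergyScattering.a0_nonneg {v : ℝ → ℝ} {R₀ μ : ℝ} {m : ℝ → ℝ} (hR₀ : 0 < R₀)
    (hμ : 0 < μ) (hv_nonneg : ∀ r, 0 ≤ v r) (zs : ZeroEnergyScattering v R₀ μ m) :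
    0 ≤ R₀ - m R₀ := by
  have hmono : MonotoneOn (deriv m) (Ioi (0:ℝ)) := by
    apply monotoneOn_of_deriv_nonneg (convex_Ioi 0) zs.derivCont
    · rw [interior_Ioi]
      exact fun x hx => (zs.diff2 x hx).differentiableWithinAt
    · rw [interior_Ioi]
      intro x hx
      have hode := zs.ode x hx
      have hm := zs.pos x hx
      nlinarith [hv_nonneg x, mul_nonneg (hv_nonneg x) hm.le]
  have hd1 : deriv m (R₀ + 1) = 1 := by
    have hev : m =ᶠ[nhds (R₀ + 1)] (fun s => s - (R₀ - m R₀)) := by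
      filter_upwards [Ioi_mem_nhds (show R₀ < R₀ + 1 by linarith)] with s hs
      exact zs.radiation s (le_of_lt hs)
    rw [hev.deriv_eq]
    simpa using ((hasDerivAt_id (R₀ + 1)).sub_const (R₀ - m R₀)).deriv
  have hmd_le : ∀ x ∈ Ioo (0:ℝ) R₀, deriv m x ≤ 1 := by
    intro x hx
    have := hmono (mem_Ioi.2 hx.1) (mem_Ioi.2 (show (0:ℝ) < R₀ + 1 by linarith))
      (by linarith [hx.2])
    rwa [hd1] at this
  have hanti : AntitoneOn (fun s => m s - s) (Icc 0 R₀) := by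
    apply antitoneOn_of_deriv_nonpos (convex_Icc 0 R₀)
    · exact (zs.cont.mono Icc_subset_Ici_self).sub continuousOn_id
    · rw [interior_Icc]
      intro x hx
      exact ((zs.diff x hx.1).sub differentiableAt_fun_id).differentiableWithinAt
    · rw [interior_Icc]
      intro x hx
      have h : HasDerivAt (fun s => m s - s) (deriv m x - 1) x :=
        (zs.diff x hx.1).hasDerivAt.sub (hasDerivAt_id x)
      rw [h.deriv]
      linarith [hmd_le x hx]
  have := hanti (left_mem_Icc.2 hR₀.le) (right_mem_Icc.2 hR₀.le) hR₀.le
  simp [zs.zero] at this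
  linarith

set_option maxHeartbeats 1000000 in
/-- **Pointwise gradient bounds for the Neumann scattering function.**  There exist `C > 0`
and a threshold `L₀ ≥ R₀`, depending only on `v` and `R₀`, such that whenever `L ≥ L₀`,
`0 ≤ E ≤ 3μ𝔞₀^μ/(L-R₀)³` and `f_L = m₁/r` is the Neumann scattering function of a Neumann
scattering solution with energy `E`, one has
`|f_L'(r)| ≤ (𝔞₀^μ + C R₀²/L)/r²` and `|f_L'(r)| ≤ (2 + C R₀/L)/r` for `0 < r ≤ L`. -/
theorem neumann_scattering_gradient_bounds
    (R₀ : ℝ) (hR₀ : 0 < R₀)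
    (v : ℝ → ℝ) (hv_meas : Measurable v) (hv_nonneg : ∀ r, 0 ≤ v r)
    (hv_bdd : BddAbove (Set.range v))
    (hv_supp : ∀ r, R₀ ≤ r → v r = 0) :
    ∃ C > (0 : ℝ), ∃ L₀ ≥ R₀,
      ∀ μ : ℝ, 0 < μ →
      ∀ m : ℝ → ℝ, ZeroEnergyScattering v R₀ μ m →
      ∀ L E : ℝ, L₀ ≤ L → 0 ≤ E → E ≤ 3 * μ * (R₀ - m R₀) / (L - R₀) ^ 3 →
      ∀ m₁ : ℝ → ℝ, NeumannScattering v μ L E m₁ →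
      ∀ r, 0 < r → r ≤ L →
        |deriv (fun s => m₁ s / s) r| ≤ ((R₀ - m R₀) + C * R₀ ^ 2 / L) / r ^ 2 ∧
        |deriv (fun s => m₁ s / s) r| ≤ (2 + C * R₀ / L) / r := by
  refine ⟨100, by norm_num, 100 * R₀, by linarith, ?_⟩
  intro μ hμ m zs L E hLge hE hEle m₁ ns r hr hrL
  -- basic positivity facts
  have hL0 : (0:ℝ) < L := by linarith
  have hR₀L : R₀ < L := by linarith
  have hLR0 : (0:ℝ) < L - R₀ := by linarith
  set a := R₀ - m R₀ with ha_def
  have ha0 : 0 ≤ a := zs.a0_nonneg hR₀ hμ hv_nonneg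
  have haR : a ≤ R₀ := by
    have := zs.pos R₀ (mem_Ioi.2 hR₀)
    simp only [ha_def]; linarith
  -- the rescaled energy k2 = E/μ
  set k2 := E / μ with hk2_def
  have hk2 : 0 ≤ k2 := div_nonneg hE hμ.le
  have hk2b : k2 * (L - R₀) ^ 3 ≤ 3 * a := by
    have hEb : E * (L - R₀) ^ 3 ≤ 3 * μ * a := (le_div_iff₀ (by positivity)).1 hEle
    rw [hk2_def, div_mul_eq_mul_div, div_le_iff₀ hμ]
    nlinarith
  -- numeric consequences
  have hF0 : k2 * L ^ 3 ≤ 4 * R₀ := by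
    have hcube : ((99:ℝ)/100 * L) ^ 3 ≤ (L - R₀) ^ 3 :=
      pow_le_pow_left₀ (by positivity) (by linarith) 3
    nlinarith [mul_le_mul_of_nonneg_left hcube hk2]
  have hk2div : k2 ≤ 4 * R₀ / L ^ 3 := by
    rw [le_div_iff₀ (by positivity)]; linarith
  have hL2 : 4 * R₀ ^ 2 ≤ L ^ 2 := by nlinarith
  have hA : k2 * L ^ 2 ≤ 4 * (R₀ / L) := by
    rw [mul_div_assoc', le_div_iff₀ hL0]
    nlinarith
  have hB : k2 * R₀ ^ 3 ≤ R₀ ^ 2 / L := by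
    have h1 : k2 * R₀ ^ 3 ≤ 4 * R₀ / L ^ 3 * R₀ ^ 3 :=
      mul_le_mul_of_nonneg_right hk2div (by positivity)
    refine h1.trans ?_
    rw [div_mul_eq_mul_div, div_le_div_iff₀ (by positivity) hL0]
    nlinarith [mul_nonneg (sq_nonneg R₀) hL0.le]
  have hCq : k2 * R₀ ^ 2 ≤ R₀ / L := by
    have h1 : k2 * R₀ ^ 2 ≤ 4 * R₀ / L ^ 3 * R₀ ^ 2 :=
      mul_le_mul_of_nonneg_right hk2div (by positivity)
    refine h1.trans ?_
    rw [div_mul_eq_mul_div, div_le_div_iff₀ (by positivity) hL0]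
    nlinarith [mul_nonneg hR₀.le hL0.le]
  have hQ1 : R₀ / L ≤ 1 / 100 := by rw [div_le_div_iff₀ hL0 (by norm_num)]; linarith
  have hk2R2 : k2 * R₀ ^ 2 ≤ 1 := hCq.trans (by linarith)
  have hP0 : 0 ≤ R₀ ^ 2 / L := by positivity
  have hQ0 : 0 ≤ R₀ / L := by positivity
  have hXa : k2 * L ^ 3 ≤ 3 * a + 12 * (R₀ ^ 2 / L) := by
    have h2 : 3 * R₀ * (k2 * L ^ 2) ≤ 3 * R₀ * (4 * (R₀ / L)) :=
      mul_le_mul_of_nonneg_left hA (by positivity)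
    have h3 : k2 * (R₀ ^ 3 - 3 * L * R₀ ^ 2) ≤ 0 :=
      mul_nonpos_of_nonneg_of_nonpos hk2 (by nlinarith)
    have h4 : 12 * (R₀ * (R₀ / L)) = 12 * (R₀ ^ 2 / L) := by ring
    linarith [hk2b, h2, h3, h4]
  -- facts about m₁ from the auxiliary lemmas
  have hm0 : ∀ s ∈ Icc (0:ℝ) L, 0 ≤ m₁ s := ns.m1_nonneg
  have hm2 : ∀ s ∈ Icc (0:ℝ) R₀, m₁ s ≤ 2 * s :=
    ns.m1_le_two hR₀ hμ hE hR₀L hv_nonneg hv_supp hk2R2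
  have hdR₀ : deriv m₁ R₀ ≤ 1 + k2 * L ^ 2 / 2 := ns.dR0_bound hR₀ hμ hE hR₀L hv_supp
  have hg_nonneg : ∀ s ∈ Icc R₀ L, 0 ≤ s * deriv m₁ s - m₁ s :=
    ns.g_nonneg hR₀ hμ hE hR₀L hv_supp
  have hg_up : ∀ s ∈ Icc R₀ L, s * deriv m₁ s - m₁ s ≤ k2 * L ^ 3 / 3 :=
    ns.g_up hR₀ hμ hE hR₀L hv_supp
  have hψmono : ∀ s t : ℝ, 0 < s → s ≤ t → t ≤ R₀ →
      (s * deriv m₁ s - m₁ s) + 2 * k2 / 3 * s ^ 3 ≤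
      (t * deriv m₁ t - m₁ t) + 2 * k2 / 3 * t ^ 3 :=
    ns.psi_mono hR₀ hμ hE hR₀L hv_nonneg hm2
  have hg_lo : ∀ s : ℝ, 0 < s → s ≤ R₀ →
      -(2 * k2 / 3 * s ^ 3) ≤ s * deriv m₁ s - m₁ s :=
    ns.g_lo hR₀ hμ hE hR₀L (ns.psi_mono hR₀ hμ hE hR₀L hv_nonneg hm2)
  have hd_up : ∀ s : ℝ, 0 < s → s ≤ R₀ → deriv m₁ s ≤ deriv m₁ R₀ + k2 * R₀ ^ 2 :=
    ns.d_up hR₀ hμ hE hR₀L hv_nonneg hm2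
  -- the two bounds on |g r|
  have Hb1 : |r * deriv m₁ r - m₁ r| ≤ a + 100 * R₀ ^ 2 / L := by
    have h100 : 100 * R₀ ^ 2 / L = 100 * (R₀ ^ 2 / L) := by ring
    rw [h100, abs_le]
    rcases le_total R₀ r with hcase | hcase
    · constructor
      · linarith [hg_nonneg r ⟨hcase, hrL⟩]
      · have h := hg_up r ⟨hcase, hrL⟩
        linarith [hXa]
    · have hup : r * deriv m₁ r - m₁ r ≤ a + 5 * (R₀ ^ 2 / L) := by
        have h1 := hψmono r R₀ hr hcase le_rfl
        have h2 := hg_up R₀ (left_mem_Icc.2 hR₀L.le)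
        have h3 : 0 ≤ 2 * k2 / 3 * r ^ 3 := by positivity
        nlinarith [hB, hXa]
      have hlo : -(a + 100 * (R₀ ^ 2 / L)) ≤ r * deriv m₁ r - m₁ r := by
        have h1 := hg_lo r hr hcase
        have h2 : r ^ 3 ≤ R₀ ^ 3 := pow_le_pow_left₀ hr.le hcase 3
        nlinarith [hB, mul_le_mul_of_nonneg_left h2 hk2]
      exact ⟨hlo, by linarith⟩
  have Hb2 : |r * deriv m₁ r - m₁ r| ≤ (2 + 100 * R₀ / L) * r := by
    have h100 : 100 * R₀ / L = 100 * (R₀ / L) := by ring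
    rw [h100, abs_le]
    rcases le_total R₀ r with hcase | hcase
    · have h1 := (abs_le.1 Hb1).2
      have h2 := (abs_le.1 Hb1).1
      have h3 : a + 100 * R₀ ^ 2 / L ≤ (2 + 100 * (R₀ / L)) * r := by
        have h4 : 100 * R₀ ^ 2 / L = 100 * (R₀ / L) * R₀ := by ring
        rw [h4]
        nlinarith [mul_le_mul_of_nonneg_left hcase hQ0, hr.le]
      constructor
      · linarith
      · linarith
    · constructor
      · have h1 := hg_lo r hr hcase
        have h2 : r ^ 2 ≤ R₀ ^ 2 := pow_le_pow_left₀ hr.le hcase 2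
        have h3 : 2 * k2 / 3 * r ^ 3 ≤ (R₀ / L) * r := by
          have h4 : 2 * k2 / 3 * r ^ 3 ≤ k2 * r ^ 2 * r := by nlinarith [pow_nonneg hr.le 3]
          have h5 : k2 * r ^ 2 ≤ k2 * R₀ ^ 2 := mul_le_mul_of_nonneg_left h2 hk2
          nlinarith [mul_le_mul_of_nonneg_right h5 hr.le,
            mul_le_mul_of_nonneg_right hCq hr.le]
        nlinarith [mul_nonneg hQ0 hr.le]
      · have hd := hd_up r hr hcase
        have h1 : deriv m₁ r ≤ 1 + 2 * (R₀ / L) + R₀ / L := by linarith [hdR₀, hA, hCq]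
        have h2 : r * deriv m₁ r - m₁ r ≤ r * deriv m₁ r := by
          linarith [hm0 r ⟨hr.le, hrL⟩]
        have h3 : r * deriv m₁ r ≤ r * (1 + 2 * (R₀ / L) + R₀ / L) :=
          mul_le_mul_of_nonneg_left h1 hr.le
        nlinarith [mul_nonneg hQ0 hr.le]
  -- conclusion
  have hderiv_f : deriv (fun s => m₁ s / s) r = (r * deriv m₁ r - m₁ r) / r ^ 2 := by
    have h1 := (ns.diff r ⟨hr, hrL⟩).hasDerivAt
    have h2 : HasDerivAt (fun s => m₁ s / s) ((deriv m₁ r * r - m₁ r * 1) / r ^ 2) r :=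
      h1.div (hasDerivAt_id r) (ne_of_gt hr)
    rw [h2.deriv]
    ring
  rw [hderiv_f, abs_div, abs_of_pos (pow_pos hr 2)]
  constructor
  · exact (div_le_div_iff_of_pos_right (pow_pos hr 2)).2 Hb1
  · rw [div_le_div_iff₀ (pow_pos hr 2) hr]
    nlinarith [mul_le_mul_of_nonneg_right Hb2 hr.le]
end
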